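/- arXiv:2109.12749 — 10 statements merged into one kernel-verified Lean document; each statement's English description precedes it below -/
import Mathlib

section
/- Let F be a finite field with exactly q elements, E a field extension of F, and α ∈ E not in the image of the algebra map F → E. If the intermediate field F(α) generated by α satisfies [F(α) : F] = 2, then the set S_α has exactly q² − q elements; if [F(α) : F] > 2, then S_α has exactly q³ − q elements. -/
/-- The set `S_α = {(aα+b)/(cα+d) : a,b,c,d ∈ F, ad ≠ bc}`, the orbit of `α`
under the Möbius action of `PGL(2,F)`. -/
def Sset (F : Type*) {E : Type*} [Field F] [Field E] [Algebra F E] (α : E) : Set E :=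
  {x | ∃ a b c d : F, a * d ≠ b * c ∧
    x = (algebraMap F E a * α + algebraMap F E b) / (algebraMap F E c * α + algebraMap F E d)}

open Module Polynomial

section Helpers

variable {F E : Type*} [Field F] [Field E] [Algebra F E] (α : E)

theorem indep2 (hα : α ∉ Set.range (algebraMap F E)) (u v : F)
    (hrel : algebraMap F E u * α + algebraMap F E v = 0) : u = 0 ∧ v = 0 := by
  by_cases hu : u = 0
  · refine ⟨hu, ?_⟩
    rw [hu] at hrel
    simpa using hrel
  · exfalso
    apply hα
    refine ⟨-v / u, ?_⟩
    have hu' : algebraMap F E u ≠ 0 := by simpa using hu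
    rw [map_div₀, map_neg, div_eq_iff hu']
    linear_combination -hrel

theorem indep3 (h : 2 < Module.finrank F (IntermediateField.adjoin F {α}))
    (c₂ c₁ c₀ : F)
    (hrel : algebraMap F E c₂ * α^2 + algebraMap F E c₁ * α + algebraMap F E c₀ = 0) :
    c₂ = 0 ∧ c₁ = 0 ∧ c₀ = 0 := by
  have hfd : FiniteDimensional F (IntermediateField.adjoin F {α}) :=
    FiniteDimensional.of_finrank_pos (by omega)
  have hint : IsIntegral F α :=
    IntermediateField.isIntegral_iff.mp
      (IsIntegral.of_finite F (⟨α, IntermediateField.mem_adjoin_simple_self F α⟩ :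
        IntermediateField.adjoin F {α}))
  have hdeg : (minpoly F α).natDegree = Module.finrank F (IntermediateField.adjoin F {α}) :=
    (IntermediateField.adjoin.finrank hint).symm
  by_contra hc
  set p : Polynomial F := C c₂ * X^2 + C c₁ * X + C c₀ with hp
  have hpne : p ≠ 0 := by
    intro h0
    apply hc
    refine ⟨?_, ?_, ?_⟩
    · have := congrArg (fun q => Polynomial.coeff q 2) h0
      simpa [hp, coeff_C] using this
    · have := congrArg (fun q => Polynomial.coeff q 1) h0
      simpa [hp, coeff_C] using this
    · have := congrArg (fun q => Polynomial.coeff q 0) h0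
      simpa [hp, coeff_C] using this
  have heval : Polynomial.aeval α p = 0 := by
    simp only [hp, map_add, map_mul, aeval_C, aeval_X, map_pow]
    rw [← hrel]
  have hle := natDegree_le_natDegree (minpoly.degree_le_of_ne_zero F α hpne heval)
  have h2 : p.natDegree ≤ 2 := by
    rw [hp]; compute_degree
  omega

theorem rep2 (hα : α ∉ Set.range (algebraMap F E))
    (h2 : Module.finrank F (IntermediateField.adjoin F {α}) = 2)
    (x : E) (hx : x ∈ IntermediateField.adjoin F {α}) :
    ∃ u v : F, x = algebraMap F E u * α + algebraMap F E v := by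
  set K := IntermediateField.adjoin F {α} with hK
  have hfd : FiniteDimensional F K := FiniteDimensional.of_finrank_pos (by omega)
  set a : K := ⟨α, IntermediateField.mem_adjoin_simple_self F α⟩ with ha
  have hnli : ¬ LinearIndependent F ![(1 : K), a, ⟨x, hx⟩] := by
    intro hli
    have := hli.fintype_card_le_finrank
    simp [h2] at this
  rw [Fintype.not_linearIndependent_iff] at hnli
  obtain ⟨g, hg, i, hi⟩ := hnli
  have hsum : g 0 • (1 : K) + g 1 • a + g 2 • (⟨x, hx⟩ : K) = 0 := by
    rw [← hg]
    simp [Fin.sum_univ_three]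
  have hE : algebraMap F E (g 0) + algebraMap F E (g 1) * α + algebraMap F E (g 2) * x = 0 := by
    have := congrArg (algebraMap K E) hsum
    simpa [Algebra.smul_def, mul_comm] using this
  have hg2 : g 2 ≠ 0 := by
    intro h20
    have hg1 : g 1 = 0 := by
      by_contra hg1
      apply hα
      refine ⟨-(g 0) / g 1, ?_⟩
      have : algebraMap F E (g 1) ≠ 0 := by
        simpa using hg1
      rw [map_div₀, map_neg, div_eq_iff this]
      rw [h20] at hE
      simp at hE
      linear_combination -hE
    have hg0 : g 0 = 0 := by
      rw [h20, hg1] at hE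
      simp at hE
      exact hE
    fin_cases i <;> simp_all
  refine ⟨-(g 1)/(g 2), -(g 0)/(g 2), ?_⟩
  have h2' : algebraMap F E (g 2) ≠ 0 := by simpa using hg2
  rw [map_div₀, map_div₀, map_neg, map_neg, div_mul_eq_mul_div, ← add_div,
    eq_div_iff h2']
  linear_combination hE

theorem den_ne (hα : α ∉ Set.range (algebraMap F E)) (c d : F) (h : ¬(c = 0 ∧ d = 0)) :
    algebraMap F E c * α + algebraMap F E d ≠ 0 := fun h0 => h (indep2 α hα c d h0)

theorem Sset_subset_adjoin : Sset F α ⊆ (IntermediateField.adjoin F {α} : IntermediateField F E) := by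
  rintro x ⟨a, b, c, d, -, rfl⟩
  set K := IntermediateField.adjoin F {α}
  have hαK : α ∈ K := IntermediateField.mem_adjoin_simple_self F α
  exact div_mem (add_mem (mul_mem (IntermediateField.algebraMap_mem K a) hαK)
      (IntermediateField.algebraMap_mem K b))
    (add_mem (mul_mem (IntermediateField.algebraMap_mem K c) hαK)
      (IntermediateField.algebraMap_mem K d))

theorem Sset_disjoint_range (hα : α ∉ Set.range (algebraMap F E)) :
    ∀ x ∈ Sset F α, x ∉ Set.range (algebraMap F E) := by
  rintro x ⟨a, b, c, d, hne, rfl⟩ ⟨t, ht⟩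
  have hden : algebraMap F E c * α + algebraMap F E d ≠ 0 := by
    apply den_ne α hα
    rintro ⟨rfl, rfl⟩
    simp at hne
  rw [eq_comm, div_eq_iff hden] at ht
  have hrel : algebraMap F E (a - t*c) * α + algebraMap F E (b - t*d) = 0 := by
    simp only [map_sub, map_mul]
    linear_combination ht
  obtain ⟨h1, h2⟩ := indep2 α hα _ _ hrel
  apply hne
  rw [sub_eq_zero.mp h1, sub_eq_zero.mp h2]; ring

end Helpers

theorem stmt_0 (F E : Type*) [Field F] [Fintype F] [Field E] [Algebra F E]
    (q : ℕ) (hq : Fintype.card F = q)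
    (α : E) (hα : α ∉ Set.range (algebraMap F E)) :
    (Module.finrank F (IntermediateField.adjoin F {α}) = 2 →
      (Sset F α).ncard = q ^ 2 - q) ∧
    (2 < Module.finrank F (IntermediateField.adjoin F {α}) →
      (Sset F α).ncard = q ^ 3 - q) := by
  have hqcard : Nat.card F = q := by rw [Nat.card_eq_fintype_card, hq]
  constructor
  · -- degree 2 case
    intro h2
    set K := IntermediateField.adjoin F {α} with hK
    have hfd : FiniteDimensional F K := FiniteDimensional.of_finrank_pos (by omega)
    have hSeq : Sset F α = (K : Set E) \ Set.range (algebraMap F E) := by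
      ext x
      constructor
      · intro hx
        exact ⟨Sset_subset_adjoin α hx, Sset_disjoint_range α hα x hx⟩
      · rintro ⟨hxK, hxr⟩
        obtain ⟨u, v, rfl⟩ := rep2 α hα h2 x hxK
        refine ⟨u, v, 0, 1, ?_, by simp⟩
        simp only [mul_one, mul_zero]
        intro h0
        exact hxr ⟨v, by rw [h0]; simp⟩
    have hfinK : Finite K := Module.finite_of_finite F
    have hKcard : Nat.card K = q ^ 2 := by
      cases nonempty_fintype K
      rw [Nat.card_eq_fintype_card, card_eq_pow_finrank (K := F) (V := K), hq, h2]
    rw [hSeq]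
    have hsub : Set.range (algebraMap F E) ⊆ (K : Set E) := fun x ⟨t, ht⟩ =>
      ht ▸ IntermediateField.algebraMap_mem K t
    rw [Set.ncard_diff hsub (Set.finite_range _)]
    have h1 : (K : Set E).ncard = q ^ 2 := by
      rw [← Nat.card_coe_set_eq, SetLike.coe_sort_coe, hKcard]
    have h2' : (Set.range (algebraMap F E)).ncard = q := by
      rw [← Nat.card_coe_set_eq,
        Nat.card_range_of_injective (algebraMap F E).injective, hqcard]
    rw [h1, h2']
  · -- degree > 2 case
    intro h3
    set φ := algebraMap F E with hφ
    have hden : ∀ d : F, α + φ d ≠ 0 := by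
      intro d h0
      exact den_ne α hα 1 d (by simp) (by simpa using h0)
    set f : Fˣ × F → E := fun p => φ p.1 * α + φ p.2 with hf
    set g : F × Fˣ × F → E := fun p => φ p.1 + φ p.2.1 / (α + φ p.2.2) with hg
    have hfinj : Function.Injective f := by
      rintro ⟨u, v⟩ ⟨u', v'⟩ h
      simp only [hf] at h
      have hrel : φ ((u : F) - u') * α + φ (v - v') = 0 := by
        simp only [map_sub]
        linear_combination h
      obtain ⟨e1, e2⟩ := indep2 α hα _ _ hrel
      simp only [Prod.mk.injEq]
      exact ⟨Units.ext (sub_eq_zero.mp e1), sub_eq_zero.mp e2⟩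
    have hginj : Function.Injective g := by
      rintro ⟨a, w, d⟩ ⟨a', w', d'⟩ h
      simp only [hg] at h
      rw [add_div' _ _ _ (hden d), add_div' _ _ _ (hden d'),
        div_eq_div_iff (hden d) (hden d')] at h
      have hrel : φ (a - a') * α^2 + φ ((a - a')*(d + d') + w - w') * α
          + φ ((a - a')*(d*d') + w*d' - w'*d) = 0 := by
        simp only [map_sub, map_add, map_mul]
        linear_combination h
      obtain ⟨e1, e2, e3⟩ := indep3 α h3 _ _ _ hrel
      have ha : a = a' := sub_eq_zero.mp e1
      rw [ha, sub_self, zero_mul, zero_add] at e2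
      have hw : (w : F) = w' := sub_eq_zero.mp e2
      rw [ha, sub_self, zero_mul, zero_add, hw] at e3
      have hd : d = d' := by
        have hw0 : (w' : F) ≠ 0 := w'.ne_zero
        have hz : (w' : F) * (d' - d) = 0 := by linear_combination e3
        rcases mul_eq_zero.mp hz with h' | h'
        · exact absurd h' hw0
        · exact (sub_eq_zero.mp h').symm
      simp only [Prod.mk.injEq]
      exact ⟨ha, Units.ext hw, hd⟩
    have hSeq : Sset F α = Set.range f ∪ Set.range g := by
      ext x
      constructor
      · rintro ⟨a, b, c, d, hne, rfl⟩
        have hdnz : φ c * α + φ d ≠ 0 := by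
          apply den_ne α hα
          rintro ⟨rfl, rfl⟩
          simp at hne
        by_cases hc : c = 0
        · left
          subst hc
          have hd : d ≠ 0 := by rintro rfl; simp at hne
          have ha : a ≠ 0 := by rintro rfl; simp at hne
          have hd' : φ d ≠ 0 := by simpa using hd
          refine ⟨(Units.mk0 (a/d) (div_ne_zero ha hd), b/d), ?_⟩
          simp only [hf, Units.val_mk0, map_div₀, map_zero, zero_mul, zero_add]
          rw [eq_div_iff hd']
          field_simp
          rw [hφ]; ring
        · right
          have hc' : φ c ≠ 0 := by simpa using hc
          have hw : (b*c - a*d)/(c^2) ≠ 0 := by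
            apply div_ne_zero
            · intro h0
              exact hne (sub_eq_zero.mp h0).symm
            · exact pow_ne_zero 2 hc
          refine ⟨(a/c, Units.mk0 _ hw, d/c), ?_⟩
          simp only [hg, Units.val_mk0, map_div₀, map_sub, map_mul, map_pow]
          have e1 : α + φ d / φ c = (φ c * α + φ d) / φ c := by
            field_simp
          rw [eq_div_iff hdnz, e1, div_div_eq_mul_div, add_mul,
            div_mul_cancel₀ _ hdnz]
          field_simp
          ring
      · rintro (⟨⟨u, v⟩, rfl⟩ | ⟨⟨a, w, d⟩, rfl⟩)
        · refine ⟨u, v, 0, 1, by simp [u.ne_zero], by simp [hf, hφ]⟩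
        · refine ⟨a, a*d + w, 1, d, ?_, ?_⟩
          · simp only [mul_one]
            intro h
            exact w.ne_zero (by linear_combination -h)
          · simp only [hg, map_add, map_mul, map_one, one_mul]
            rw [add_div' _ _ _ (hden d)]
            congr 1
            ring
    have hdisj : Disjoint (Set.range f) (Set.range g) := by
      rw [Set.disjoint_left]
      rintro x ⟨⟨u, v⟩, rfl⟩ ⟨⟨a, w, d⟩, heq⟩
      simp only [hf, hg] at heq
      rw [add_div' _ _ _ (hden d), div_eq_iff (hden d)] at heq
      have hrel : φ (u : F) * α^2 + φ ((u : F)*d + v - a) * α + φ (v*d - a*d - (w : F)) = 0 := by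
        simp only [map_sub, map_add, map_mul]
        linear_combination -heq
      obtain ⟨e1, -, -⟩ := indep3 α h3 _ _ _ hrel
      exact u.ne_zero e1
    rw [hSeq, Set.ncard_union_eq hdisj (Set.finite_range f) (Set.finite_range g)]
    have hcard_units : Nat.card Fˣ = q - 1 := by
      classical
      rw [Nat.card_eq_fintype_card, Fintype.card_units, hq]
    have hcf : (Set.range f).ncard = (q - 1) * q := by
      rw [← Nat.card_coe_set_eq, Nat.card_range_of_injective hfinj, Nat.card_prod,
        hcard_units, hqcard]
    have hcg : (Set.range g).ncard = q * ((q - 1) * q) := by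
      rw [← Nat.card_coe_set_eq, Nat.card_range_of_injective hginj, Nat.card_prod,
        Nat.card_prod, hcard_units, hqcard]
    rw [hcf, hcg]
    have hq1 : 1 ≤ q := by
      rw [← hq]
      exact Fintype.card_pos
    obtain ⟨k, rfl⟩ : ∃ k, q = k + 1 := ⟨q - 1, by omega⟩
    have : (k + 1) ^ 3 = ((k+1) - 1) * (k+1) + (k+1) * (((k+1) - 1) * (k+1)) + (k+1) := by
      simp only [Nat.add_sub_cancel]
      ring
    omega
end

section
/- Let F be a finite field, E a field extension of F, k ≥ 1, and W an E-subspace of E^k = (Fin k → E) containing no nonzero F-rational vector. Let α ∈ E not in the image of F with [F(α) : F] = 2, let v, u₁, u₂ be nonzero F-rational vectors, and let β₁, β₂ ∈ S_α be such that v − β₁·u₁ ∈ W and v − β₂·u₂ ∈ W. Then u₂ lies in the F-span of {v, u₁}; in other words, through a point of the canonical subgeometry there is at most one Π-line of type S_α when [F(α) : F] = 2. -/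
lemma lin_aux {F E : Type*} [Field F] [Field E] [Algebra F E] {α : E}
    (hα : α ∉ Set.range (algebraMap F E)) {p q : F}
    (h : algebraMap F E p * α + algebraMap F E q = 0) : p = 0 ∧ q = 0 := by
  by_cases hp : p = 0
  · subst hp
    simp only [map_zero, zero_mul, zero_add] at h
    exact ⟨rfl, (algebraMap F E).injective (by simpa using h)⟩
  · exfalso
    apply hα
    refine ⟨-q / p, ?_⟩
    have hp' : algebraMap F E p ≠ 0 := fun h0 => hp ((algebraMap F E).injective (by simpa using h0))
    rw [map_div₀, map_neg, div_eq_iff hp']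
    linear_combination -h

lemma Sset_props {F E : Type*} [Field F] [Field E] [Algebra F E] {α : E}
    (hα : α ∉ Set.range (algebraMap F E)) {β : E} (hβ : β ∈ Sset F α) :
    β ∈ IntermediateField.adjoin F {α} ∧ β ∉ Set.range (algebraMap F E) := by
  obtain ⟨a, b, c, d, had, rfl⟩ := hβ
  have hD : algebraMap F E c * α + algebraMap F E d ≠ 0 := by
    intro h0
    obtain ⟨hc, hd⟩ := lin_aux hα h0
    exact had (by simp [hc, hd])
  constructor
  · set K := IntermediateField.adjoin F {α}
    have hαK : α ∈ K := IntermediateField.mem_adjoin_simple_self F α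
    exact K.div_mem (K.add_mem (K.mul_mem (K.algebraMap_mem a) hαK) (K.algebraMap_mem b))
      (K.add_mem (K.mul_mem (K.algebraMap_mem c) hαK) (K.algebraMap_mem d))
  · rintro ⟨e, he⟩
    have h1 : algebraMap F E e * (algebraMap F E c * α + algebraMap F E d)
        = algebraMap F E a * α + algebraMap F E b := by
      rw [he]; exact div_mul_cancel₀ _ hD
    have h2 : algebraMap F E (e * c - a) * α + algebraMap F E (e * d - b) = 0 := by
      push_cast [map_sub, map_mul]
      linear_combination h1
    obtain ⟨h3, h4⟩ := lin_aux hα h2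
    have h5 : e * c = a := sub_eq_zero.mp h3
    have h6 : e * d = b := sub_eq_zero.mp h4
    exact had (by rw [← h5, ← h6]; ring)

theorem stmt_6 (F E : Type*) [Field F] [Fintype F] [Field E] [Algebra F E]
    (k : ℕ) (hk : 1 ≤ k) (W : Submodule E (Fin k → E))
    (hW : ∀ x ∈ W, (∀ i, x i ∈ Set.range (algebraMap F E)) → x = 0)
    (α : E) (hα : α ∉ Set.range (algebraMap F E))
    (hdeg : Module.finrank F (IntermediateField.adjoin F {α}) = 2)
    (v u₁ u₂ : Fin k → E) (hv0 : v ≠ 0) (hu₁0 : u₁ ≠ 0) (hu₂0 : u₂ ≠ 0)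
    (hv : ∀ i, v i ∈ Set.range (algebraMap F E))
    (hu₁ : ∀ i, u₁ i ∈ Set.range (algebraMap F E))
    (hu₂ : ∀ i, u₂ i ∈ Set.range (algebraMap F E))
    (β₁ β₂ : E) (hβ₁ : β₁ ∈ Sset F α) (hβ₂ : β₂ ∈ Sset F α)
    (h1 : v - β₁ • u₁ ∈ W) (h2 : v - β₂ • u₂ ∈ W) :
    u₂ ∈ Submodule.span F ({v, u₁} : Set (Fin k → E)) := by
  obtain ⟨hβ₁K, hβ₁r⟩ := Sset_props hα hβ₁
  obtain ⟨hβ₂K, hβ₂r⟩ := Sset_props hα hβ₂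
  have hβ₁0 : β₁ ≠ 0 := fun h => hβ₁r ⟨0, by simp [h]⟩
  have hβ₂0 : β₂ ≠ 0 := fun h => hβ₂r ⟨0, by simp [h]⟩
  set K := IntermediateField.adjoin F {α} with hK
  have hFD : FiniteDimensional F K := Module.finite_of_finrank_pos (by rw [hdeg]; norm_num)
  -- three elements of the 2-dimensional space K are dependent
  set b : Fin 3 → K := ![⟨β₁ * β₂, K.mul_mem hβ₁K hβ₂K⟩, ⟨β₂, hβ₂K⟩, ⟨β₁, hβ₁K⟩] with hb
  have hnli : ¬ LinearIndependent F b := by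
    intro h
    have := h.fintype_card_le_finrank
    rw [hdeg] at this
    simp at this
  obtain ⟨g, hg0, i0, hgi0⟩ := Fintype.not_linearIndependent_iff.mp hnli
  set x := g 0 with hx
  set y := g 1 with hy
  set z := g 2 with hzdef
  set x' := algebraMap F E x with hx'
  set y' := algebraMap F E y with hy'
  set z' := algebraMap F E z with hz'
  have hrel : x' * (β₁ * β₂) + y' * β₂ + z' * β₁ = 0 := by
    have := congrArg (Subtype.val) hg0
    simpa [Fin.sum_univ_three, hb, Algebra.smul_def, x', y', z'] using this
  -- the rational vector x'•v + y'•u₁ + z'•u₂ lies in W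
  have hrW : x' • v + y' • u₁ + z' • u₂ ∈ W := by
    have heq : (-(y' / β₁)) • (v - β₁ • u₁) + (-(z' / β₂)) • (v - β₂ • u₂)
        = x' • v + y' • u₁ + z' • u₂ := by
      funext i
      simp only [Pi.add_apply, Pi.sub_apply, Pi.smul_apply, smul_eq_mul]
      field_simp
      linear_combination (-(v i)) * hrel
    rw [← heq]
    exact W.add_mem (W.smul_mem _ h1) (W.smul_mem _ h2)
  have hr0 : x' • v + y' • u₁ + z' • u₂ = 0 := by
    apply hW _ hrW
    intro i
    obtain ⟨vi, hvi⟩ := hv i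
    obtain ⟨u1i, hu1i⟩ := hu₁ i
    obtain ⟨u2i, hu2i⟩ := hu₂ i
    refine ⟨x * vi + y * u1i + z * u2i, ?_⟩
    simp only [Pi.add_apply, Pi.smul_apply, smul_eq_mul, map_add, map_mul, hvi, hu1i, hu2i]
    rfl
  have hcoord : ∀ i, x' * v i + y' * u₁ i + z' * u₂ i = 0 := by
    intro i
    have := congrFun hr0 i
    simpa using this
  by_cases hz : z = 0
  · exfalso
    have hz0 : z' = 0 := by rw [hz', hz, map_zero]
    by_cases hy0 : y = 0
    · -- then x ≠ 0 and v = 0, contradiction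
      have hx0 : x ≠ 0 := by
        intro h
        apply hgi0
        fin_cases i0
        · exact h
        · exact hy0
        · exact hz
      have hx0' : x' ≠ 0 := fun h => hx0 ((algebraMap F E).injective (by simpa [x'] using h))
      apply hv0
      funext i
      have := hcoord i
      rw [hz0, hy', hy0, map_zero] at this
      simp only [zero_mul, add_zero] at this
      have : x' * v i = 0 := this
      simpa using (mul_eq_zero.mp this).resolve_left hx0'
    · have hy0' : y' ≠ 0 := fun h => hy0 ((algebraMap F E).injective (by simpa [y'] using h))
      have hx0 : x ≠ 0 := by
        intro h
        apply hu₁0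
        funext i
        have := hcoord i
        rw [hz0, hx', h, map_zero] at this
        simp only [zero_mul, zero_add, add_zero] at this
        simpa using (mul_eq_zero.mp this).resolve_left hy0'
      have hx0' : x' ≠ 0 := fun h => hx0 ((algebraMap F E).injective (by simpa [x'] using h))
      -- u₁ = (-(x'/y')) • v
      have hu₁v : ∀ i, u₁ i = (-(x' / y')) * v i := by
        intro i
        have := hcoord i
        rw [hz0] at this
        field_simp
        linear_combination this
      set c' : E := -(x' / y') with hc'
      have hc0 : c' ≠ 0 := by
        simp [hc', div_eq_zero_iff, hx0', hy0']
      have hd : (1 : E) - β₁ * c' ≠ 0 := by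
        intro h
        apply hβ₁r
        refine ⟨(-(x / y))⁻¹, ?_⟩
        have hβc : β₁ * c' = 1 := by linear_combination -h
        have hcm : c' = algebraMap F E (-(x / y)) := by
          rw [map_neg, map_div₀]
        rw [map_inv₀, ← hcm]
        exact inv_eq_of_mul_eq_one_right (by linear_combination hβc)
      have hvw : v = (1 - β₁ * c')⁻¹ • (v - β₁ • u₁) := by
        funext i
        simp only [Pi.smul_apply, Pi.sub_apply, smul_eq_mul]
        rw [hu₁v i]
        field_simp
      have hvW : v ∈ W := by
        rw [hvw]; exact W.smul_mem _ h1
      exact hv0 (hW v hvW hv)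
  · -- z ≠ 0 : conclude u₂ ∈ span {v, u₁}
    have hz0' : z' ≠ 0 := fun h => hz ((algebraMap F E).injective (by simpa [z'] using h))
    rw [Submodule.mem_span_pair]
    refine ⟨-(x / z), -(y / z), ?_⟩
    funext i
    simp only [Pi.add_apply, Pi.smul_apply, Algebra.smul_def, map_neg, map_div₀, Pi.mul_apply, Pi.neg_apply, Pi.algebraMap_apply]
    have := hcoord i
    have hZ : algebraMap F E z ≠ 0 := hz0'
    field_simp
    linear_combination (-1 : E) * this
end

section
/- Let E be a field, V an E-vector space, and u₁, v₁, u₂, v₂ ∈ V linearly independent over E. Let α, α', ψ ∈ E and set M = span_E{u₁ − α·v₁, u₂ − α'·v₂}. If (u₁ + u₂) − ψ·(v₁ + v₂) ∈ M, then α' = α and ψ = α; consequently, for every λ ∈ E one has (u₁ + λ·u₂) − α·(v₁ + λ·v₂) ∈ M. (This is the core of the regulus lemma: if three mutually disjoint Π-lines in a 3-space have extensions meeting a common line M of the vertex, then all lines of the regulus they determine are Π-lines of the same type.) -/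
theorem stmt_9 (E : Type*) [Field E] (V : Type*) [AddCommGroup V] [Module E V]
    (u₁ v₁ u₂ v₂ : V) (hind : LinearIndependent E ![u₁, v₁, u₂, v₂])
    (α α' ψ : E)
    (h : (u₁ + u₂) - ψ • (v₁ + v₂) ∈ Submodule.span E {u₁ - α • v₁, u₂ - α' • v₂}) :
    α' = α ∧ ψ = α ∧
      ∀ l : E, (u₁ + l • u₂) - α • (v₁ + l • v₂) ∈
        Submodule.span E {u₁ - α • v₁, u₂ - α' • v₂} := by
  rw [Submodule.mem_span_pair] at h
  obtain ⟨a, b, hab⟩ := h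
  have key : ∀ i, ![1 - a, a * α - ψ, 1 - b, b * α' - ψ] i = 0 := by
    rw [Fintype.linearIndependent_iff] at hind
    apply hind
    have : ∑ i, ![1 - a, a * α - ψ, 1 - b, b * α' - ψ] i • ![u₁, v₁, u₂, v₂] i =
        ((u₁ + u₂) - ψ • (v₁ + v₂)) - (a • (u₁ - α • v₁) + b • (u₂ - α' • v₂)) := by
      simp [Fin.sum_univ_four, smul_sub, sub_smul, mul_smul, smul_add]
      abel
    rw [this, hab, sub_self]
  have h0 := key 0
  have h1 := key 1
  have h2 := key 2
  have h3 := key 3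
  simp only [Matrix.cons_val_zero, Matrix.cons_val_one, Matrix.head_cons,
    Matrix.cons_val_two, Matrix.tail_cons, Matrix.cons_val_three, sub_eq_zero] at h0 h1 h2 h3
  have ha : a = 1 := h0.symm
  have hb : b = 1 := h2.symm
  subst ha hb
  rw [one_mul] at h1 h3
  refine ⟨h3.trans h1.symm, h1.symm, fun l => ?_⟩
  rw [h3.trans h1.symm, Submodule.mem_span_pair]
  exact ⟨1, l, by simp [smul_sub, smul_add, smul_smul, mul_comm]; abel⟩
end

section
/- Let F be a field, E a field extension of F, V an E-vector space, and u₁, v₁, u₂, v₂ ∈ V linearly independent over E. Let α ∈ E with [F(α) : F] > 2, where F(α) is the intermediate field of E/F generated by α. Let λ₁, λ₂, λ₃, λ₄, μ₁, μ₂, μ₃, μ₄ ∈ F (viewed in E via the algebra map), and set u = λ₁·u₁ + λ₂·v₁ + λ₃·u₂ + λ₄·v₂ and v = μ₁·u₁ + μ₂·v₁ + μ₃·u₂ + μ₄·v₂. If u − α·v ∈ span_E{u₁ − α·v₁, u₂ − α·v₂}, then λ₂ = λ₄ = 0, μ₁ = μ₃ = 0, μ₂ = λ₁, and μ₄ = λ₃.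 (Equivalently: if a 3-space contains a Π-line through the common line M of the vertex outside the regulus determined by three such lines, then [F(α) : F] = 2.) -/
open Polynomial in
lemma quad_aux (F E : Type*) [Field F] [Field E] [Algebra F E] (α : E)
    (hα : 2 < Module.finrank F (IntermediateField.adjoin F {α}))
    (a b c : F)
    (h : algebraMap F E a * α ^ 2 + algebraMap F E b * α + algebraMap F E c = 0) :
    a = 0 ∧ b = 0 ∧ c = 0 := by
  set p : F[X] := C a * X ^ 2 + C b * X + C c with hp
  have hev : aeval α p = 0 := by
    simpa [hp, Algebra.smul_def] using h
  by_cases hp0 : p = 0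
  · refine ⟨?_, ?_, ?_⟩
    · have := congrArg (fun q : F[X] => q.coeff 2) hp0
      simpa [hp, coeff_C] using this
    · have := congrArg (fun q : F[X] => q.coeff 1) hp0
      simpa [hp, coeff_C] using this
    · have := congrArg (fun q : F[X] => q.coeff 0) hp0
      simpa [hp, coeff_C] using this
  · exfalso
    have halg : IsAlgebraic F α := ⟨p, hp0, hev⟩
    have hint : IsIntegral F α := halg.isIntegral
    have hfin : Module.finrank F (IntermediateField.adjoin F {α}) =
        (minpoly F α).natDegree := IntermediateField.adjoin.finrank hint
    have hdeg : (minpoly F α).degree ≤ p.degree :=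
      minpoly.degree_le_of_ne_zero F α hp0 hev
    have hpd : p.degree ≤ 2 := degree_quadratic_le
    have : (minpoly F α).natDegree ≤ 2 :=
      natDegree_le_iff_degree_le.mpr (le_trans hdeg hpd)
    omega

theorem stmt_10 (F E : Type*) [Field F] [Field E] [Algebra F E]
    (V : Type*) [AddCommGroup V] [Module E V]
    (u₁ v₁ u₂ v₂ : V) (hind : LinearIndependent E ![u₁, v₁, u₂, v₂])
    (α : E) (hα : 2 < Module.finrank F (IntermediateField.adjoin F {α}))
    (l₁ l₂ l₃ l₄ m₁ m₂ m₃ m₄ : F)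
    (h : (algebraMap F E l₁ • u₁ + algebraMap F E l₂ • v₁ +
          algebraMap F E l₃ • u₂ + algebraMap F E l₄ • v₂) -
        α • (algebraMap F E m₁ • u₁ + algebraMap F E m₂ • v₁ +
          algebraMap F E m₃ • u₂ + algebraMap F E m₄ • v₂) ∈
        Submodule.span E {u₁ - α • v₁, u₂ - α • v₂}) :
    l₂ = 0 ∧ l₄ = 0 ∧ m₁ = 0 ∧ m₃ = 0 ∧ m₂ = l₁ ∧ m₄ = l₃ := by
  rw [Submodule.mem_span_pair] at h
  obtain ⟨a, b, hab⟩ := h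
  set g : Fin 4 → E := ![algebraMap F E l₁ - α * algebraMap F E m₁ - a,
    algebraMap F E l₂ - α * algebraMap F E m₂ + α * a,
    algebraMap F E l₃ - α * algebraMap F E m₃ - b,
    algebraMap F E l₄ - α * algebraMap F E m₄ + α * b] with hg
  have hsum : ∑ i, g i • ![u₁, v₁, u₂, v₂] i = 0 := by
    simp only [Fin.sum_univ_four, hg]
    simp only [Matrix.cons_val_zero, Matrix.cons_val_one, Matrix.head_cons,
      Matrix.cons_val_two, Matrix.tail_cons, Matrix.cons_val_three]
    linear_combination (norm := module) -hab
  have key := Fintype.linearIndependent_iff.mp hind g hsum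
  have e0 := key 0
  have e1 := key 1
  have e2 := key 2
  have e3 := key 3
  simp only [hg, Matrix.cons_val_zero, Matrix.cons_val_one, Matrix.head_cons,
    Matrix.cons_val_two, Matrix.tail_cons, Matrix.cons_val_three] at e0 e1 e2 e3
  have q1 : algebraMap F E (-m₁) * α ^ 2 + algebraMap F E (l₁ - m₂) * α +
      algebraMap F E l₂ = 0 := by
    simp only [map_neg, map_sub]
    linear_combination e1 + α * e0
  have q2 : algebraMap F E (-m₃) * α ^ 2 + algebraMap F E (l₃ - m₄) * α +
      algebraMap F E l₄ = 0 := by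
    simp only [map_neg, map_sub]
    linear_combination e3 + α * e2
  obtain ⟨ha1, hb1, hc1⟩ := quad_aux F E α hα _ _ _ q1
  obtain ⟨ha2, hb2, hc2⟩ := quad_aux F E α hα _ _ _ q2
  exact ⟨hc1, hc2, neg_eq_zero.mp ha1, neg_eq_zero.mp ha2,
    (sub_eq_zero.mp hb1).symm, (sub_eq_zero.mp hb2).symm⟩
end

section
/- Let F be a field, E a field extension of F, V an E-vector space, and u₁, v₁, u₂, v₂ ∈ V linearly independent over E. Let α ∈ E not in the image of F, and suppose a, b ∈ F satisfy a·α² + b·α = 1 (so [F(α) : F] = 2). Set M = span_E{u₁ − α·v₁, u₂ − α·v₂}. Then for all ν₁, ν₂, ν₃, ν₄ ∈ F, putting u' = ν₁·u₁ + ν₂·v₁ + ν₃·u₂ + ν₄·v₂ and v' = (a·ν₂)·u₁ + (b·ν₂ + ν₁)·v₁ + (a·ν₄)·u₂ + (b·ν₄ + ν₃)·v₂, one has u' − α·v' ∈ M. (This is the core of the converse part of the regulus lemma: a 3-space containing three disjoint Π-lines of the same type S_α with [F(α) : F] = 2 whose extensions meet a common line M of the vertex is partitioned by Π-lines of type S_α.)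 -/
theorem stmt_11 (F E : Type*) [Field F] [Field E] [Algebra F E]
    (V : Type*) [AddCommGroup V] [Module E V]
    (u₁ v₁ u₂ v₂ : V) (hind : LinearIndependent E ![u₁, v₁, u₂, v₂])
    (α : E) (hα : α ∉ Set.range (algebraMap F E))
    (a b : F) (hab : algebraMap F E a * α ^ 2 + algebraMap F E b * α = 1) :
    ∀ ν₁ ν₂ ν₃ ν₄ : F,
      (algebraMap F E ν₁ • u₁ + algebraMap F E ν₂ • v₁ +
        algebraMap F E ν₃ • u₂ + algebraMap F E ν₄ • v₂) -
      α • (algebraMap F E (a * ν₂) • u₁ + algebraMap F E (b * ν₂ + ν₁) • v₁ +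
        algebraMap F E (a * ν₄) • u₂ + algebraMap F E (b * ν₄ + ν₃) • v₂) ∈
      Submodule.span E {u₁ - α • v₁, u₂ - α • v₂} := by
  intro ν₁ ν₂ ν₃ ν₄
  have key : (algebraMap F E ν₁ • u₁ + algebraMap F E ν₂ • v₁ +
        algebraMap F E ν₃ • u₂ + algebraMap F E ν₄ • v₂) -
      α • (algebraMap F E (a * ν₂) • u₁ + algebraMap F E (b * ν₂ + ν₁) • v₁ +
        algebraMap F E (a * ν₄) • u₂ + algebraMap F E (b * ν₄ + ν₃) • v₂) =
      (algebraMap F E ν₁ - α * algebraMap F E (a * ν₂)) • (u₁ - α • v₁) +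
      (algebraMap F E ν₃ - α * algebraMap F E (a * ν₄)) • (u₂ - α • v₂) := by
    match_scalars <;> (try simp only [map_mul, map_add]) <;>
      first
        | ring1
        | linear_combination (-(algebraMap F E ν₂)) * hab
        | linear_combination (-(algebraMap F E ν₄)) * hab
  rw [key]
  exact Submodule.add_mem _
    (Submodule.smul_mem _ _ (Submodule.subset_span (Set.mem_insert _ _)))
    (Submodule.smul_mem _ _ (Submodule.subset_span (Set.mem_insert_of_mem _ rfl)))
end

section
/- Let F be a finite field with exactly q elements, E a field extension of F of finite degree h with h ≥ 4, and U an F-subspace of E × E with dim_F U = 4 such that every point of the F-linear set L_U has weight 2 with respect to U, i.e. for every nonzero u ∈ U one has dim_F (U ∩ span_E{u}) = 2. Then h is even (equivalently, E contains an intermediate field of degree 2 over F). -/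
theorem stmt_12 (F E : Type*) [Field F] [Fintype F] [Field E] [Algebra F E]
    [FiniteDimensional F E] (q h : ℕ) (hq : Fintype.card F = q)
    (hh : Module.finrank F E = h) (hh4 : 4 ≤ h)
    (U : Submodule F (E × E)) (hU : Module.finrank F U = 4)
    (hwt : ∀ u ∈ U, u ≠ 0 →
      Module.finrank F ↥(U ⊓ (Submodule.span E {u}).restrictScalars F) = 2) :
    Even h := by
  classical
  -- the F-linear map λ ↦ λ • u
  set f : (E × E) → (E →ₗ[F] E × E) :=
    fun u => (LinearMap.toSpanSingleton E (E × E) u).restrictScalars F with hf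
  -- S u = { λ : E | λ • u ∈ U }
  set S : (E × E) → Submodule F E := fun u => U.comap (f u) with hS
  have hmemS : ∀ u x, x ∈ S u ↔ x • u ∈ U := fun u x => Iff.rfl
  have hinj : ∀ u : E × E, u ≠ 0 → Function.Injective (f u) := by
    intro u hu x y hxy
    simp only [hf, LinearMap.restrictScalars_apply, LinearMap.toSpanSingleton_apply] at hxy
    have : (x - y) • u = 0 := by rw [sub_smul, hxy, sub_self]
    rcases smul_eq_zero.mp this with h | h
    · exact sub_eq_zero.mp h
    · exact absurd h hu
  have hrange : ∀ u : E × E, LinearMap.range (f u) = (Submodule.span E {u}).restrictScalars F := by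
    intro u
    ext x
    simp only [LinearMap.mem_range, Submodule.restrictScalars_mem, Submodule.mem_span_singleton]
    constructor
    · rintro ⟨c, hc⟩; exact ⟨c, hc⟩
    · rintro ⟨c, hc⟩; exact ⟨c, hc⟩
  -- dimension of S u
  have hdim : ∀ u ∈ U, u ≠ 0 → Module.finrank F (S u) = 2 := by
    intro u hu hu0
    have e1 : Module.finrank F (S u) = Module.finrank F ((S u).map (f u)) :=
      (Submodule.equivMapOfInjective (f u) (hinj u hu0) (S u)).finrank_eq
    have e2 : (S u).map (f u) = U ⊓ (Submodule.span E {u}).restrictScalars F := by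
      rw [hS, Submodule.map_comap_eq, hrange, inf_comm]
    rw [e1, e2, hwt u hu hu0]
  have hone : ∀ u ∈ U, (1 : E) ∈ S u := by
    intro u hu; rw [hmemS, one_smul]; exact hu
  -- key step: equal spaces for independent vectors
  have hkey : ∀ u ∈ U, ∀ v ∈ U, u ≠ 0 → (v ∉ Submodule.span E {u}) → S u = S v := by
    intro u hu v hv hu0 hind
    have hv0 : v ≠ 0 := fun h => hind (h ▸ Submodule.zero_mem _)
    -- independence
    have hindep : ∀ α β : E, α • u + β • v = 0 → α = 0 ∧ β = 0 := by
      intro α β hab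
      have hβ : β = 0 := by
        by_contra hβ
        apply hind
        rw [Submodule.mem_span_singleton]
        refine ⟨-(β⁻¹ * α), ?_⟩
        have h1 : β • v = -(α • u) := by linear_combination (norm := module) hab
        have h2 : v = β⁻¹ • (β • v) := (inv_smul_smul₀ hβ v).symm
        rw [h2, h1]
        module
      refine ⟨?_, hβ⟩
      rw [hβ, zero_smul, add_zero] at hab
      rcases smul_eq_zero.mp hab with h | h
      · exact h
      · exact absurd h hu0
    -- the map (λ, μ) ↦ λ • u + μ • v
    set g : (E × E) →ₗ[F] (E × E) :=
      (f u).comp (LinearMap.fst F E E) + (f v).comp (LinearMap.snd F E E) with hg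
    have hgapp : ∀ p : E × E, g p = p.1 • u + p.2 • v := by
      intro p; simp [hg, hf]
    set Phi : (↥(S u) × ↥(S v)) →ₗ[F] (E × E) :=
      g.comp ((S u).subtype.prodMap (S v).subtype) with hPhi
    have hPhiapp : ∀ p : ↥(S u) × ↥(S v), Phi p = (p.1 : E) • u + (p.2 : E) • v := by
      intro p
      rw [hPhi, LinearMap.comp_apply, LinearMap.prodMap_apply, hgapp]
      rfl
    have hPhiinj : Function.Injective Phi := by
      rw [← LinearMap.ker_eq_bot, Submodule.eq_bot_iff]
      rintro ⟨a, b⟩ hx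
      rw [LinearMap.mem_ker, hPhiapp] at hx
      obtain ⟨h1, h2⟩ := hindep _ _ hx
      exact Prod.ext (Subtype.ext h1) (Subtype.ext h2)
    -- U = image of (S u) × (S v)
    have hUeq : LinearMap.range Phi = U := by
      have hle : LinearMap.range Phi ≤ U := by
        rintro x ⟨p, rfl⟩
        rw [hPhiapp]
        exact U.add_mem ((hmemS u _).mp p.1.2) ((hmemS v _).mp p.2.2)
      have hdimeq : Module.finrank F (LinearMap.range Phi) = 4 := by
        rw [LinearMap.finrank_range_of_inj hPhiinj, Module.finrank_prod,
          hdim u hu hu0, hdim v hv hv0]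
      exact Submodule.eq_of_le_of_finrank_le hle (by rw [hdimeq, hU])
    -- hence S (u + v) ≤ S u ⊓ S v
    have huv : u + v ∈ U := U.add_mem hu hv
    have huv0 : u + v ≠ 0 := by
      intro h
      apply hind
      rw [Submodule.mem_span_singleton]
      have hv' : v = -u := eq_neg_of_add_eq_zero_right h
      exact ⟨-1, by rw [hv']; exact neg_one_smul E u⟩
    have hsub : S (u + v) ≤ S u ⊓ S v := by
      intro ν hν
      rw [hmemS] at hν
      rw [← hUeq] at hν
      obtain ⟨⟨a, b⟩, heq⟩ := hν
      rw [hPhiapp] at heq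
      have h0 : ((a : E) - ν) • u + ((b : E) - ν) • v = 0 := by
        rw [smul_add] at heq
        linear_combination (norm := module) heq
      obtain ⟨h1, h2⟩ := hindep _ _ h0
      have ha : (a : E) = ν := sub_eq_zero.mp h1
      have hb : (b : E) = ν := sub_eq_zero.mp h2
      exact ⟨ha ▸ a.2, hb ▸ b.2⟩
    have h1 : S (u + v) = S u := by
      apply Submodule.eq_of_le_of_finrank_le (hsub.trans inf_le_left)
      rw [hdim u hu hu0, hdim (u + v) huv huv0]
    have h2 : S (u + v) = S v := by
      apply Submodule.eq_of_le_of_finrank_le (hsub.trans inf_le_right)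
      rw [hdim v hv hv0, hdim (u + v) huv huv0]
    rw [← h1, ← h2]
  -- pick u ∈ U nonzero
  have hUne : ∃ u ∈ U, u ≠ (0 : E × E) := by
    by_contra hc
    push_neg at hc
    have : U = ⊥ := by
      rw [Submodule.eq_bot_iff]; exact hc
    rw [this, finrank_bot] at hU
    omega
  obtain ⟨u, hu, hu0⟩ := hUne
  -- pick v ∈ U independent of u
  have hvex : ∃ v ∈ U, v ∉ Submodule.span E {u} := by
    by_contra hc
    push_neg at hc
    have hle : U ≤ (Submodule.span E {u}).restrictScalars F := hc
    have : U ⊓ (Submodule.span E {u}).restrictScalars F = U := inf_eq_left.mpr hle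
    have h2 := hwt u hu hu0
    rw [this, hU] at h2
    omega
  obtain ⟨v, hv, hvind⟩ := hvex
  have hv0 : v ≠ 0 := fun hc => hvind (hc ▸ Submodule.zero_mem _)
  -- multiplicative closure of S u
  have hmul : ∀ x y : E, x ∈ S u → y ∈ S u → x * y ∈ S u := by
    intro x y hx hy
    rcases eq_or_ne x 0 with rfl | hx0
    · rw [zero_mul]; exact (S u).zero_mem
    have hxu : x • u ∈ U := (hmemS u x).mp hx
    have hxu0 : x • u ≠ 0 := smul_ne_zero hx0 hu0
    have hvind' : v ∉ Submodule.span E {x • u} := by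
      intro hc
      apply hvind
      rw [Submodule.mem_span_singleton] at hc ⊢
      obtain ⟨c, hc⟩ := hc
      exact ⟨c * x, by rw [mul_smul]; exact hc⟩
    have e1 : S u = S v := hkey u hu v hv hu0 hvind
    have e2 : S (x • u) = S v := hkey (x • u) hxu v hv hxu0 hvind'
    have hy' : y ∈ S (x • u) := by rw [e2, ← e1]; exact hy
    rw [hmemS] at hy' ⊢
    rw [mul_comm, mul_smul]
    exact hy'
  -- build the intermediate field
  set K : Subalgebra F E := (S u).toSubalgebra (hone u hu) hmul with hK
  have hKrank : Module.finrank F K = 2 := by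
    rw [← Subalgebra.finrank_toSubmodule]
    exact hdim u hu hu0
  have : Algebra.IsAlgebraic F E := Algebra.IsAlgebraic.of_finite F E
  set L : IntermediateField F E := K.toIntermediateField' (Subalgebra.isField_of_algebraic K)
    with hL
  have hLrank : Module.finrank F L = 2 := hKrank
  have := Module.finrank_mul_finrank F L E
  rw [hLrank, hh] at this
  exact ⟨Module.finrank (↥L) E, by omega⟩
end

section
/- Let F be a finite field with exactly q elements, E a field extension of F of finite degree h, and U an F-subspace of E × E with dim_F U = k, where 5 ≤ k ≤ h. Suppose there is a nonzero v₀ ∈ U with dim_F (U ∩ span_E{v₀}) = k − 2, and that every nonzero u ∈ U with u ∉ span_E{v₀} satisfies dim_F (U ∩ span_E{u}) = 2 (i.e. L_U has one point of weight k − 2 and all other points of weight 2). Then there exists a natural number s with 1 < s, s dividing k − 2, and s dividing h; equivalently, there is an intermediate field K of E/F with 1 < [K : F] and [K : F] dividing k − 2. -/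
open Module Submodule

section Aux

variable {F E : Type*} [Field F] [Field E] [Algebra F E]

/-- The space of scalars moving `x` into `U` has the same dimension as the
weight space `U ⊓ ⟨x⟩`. -/
lemma aux_comap_finrank (U : Submodule F (E × E)) (x : E × E) (hx : x ≠ 0) :
    finrank F ↥(Submodule.comap ((LinearMap.toSpanSingleton E (E × E) x).restrictScalars F) U)
      = finrank F ↥(U ⊓ (Submodule.span E {x}).restrictScalars F) := by
  set f := (LinearMap.toSpanSingleton E (E × E) x).restrictScalars F with hf
  have happ : ∀ a : E, f a = a • x := fun a => rfl
  have hinj : Function.Injective f := by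
    intro a b hab
    have h1 : (a - b) • x = 0 := by
      rw [sub_smul, ← happ, ← happ, hab, sub_self]
    rcases smul_eq_zero.mp h1 with h | h
    · exact sub_eq_zero.mp h
    · exact absurd h hx
  have hrange : LinearMap.range f = (Submodule.span E {x}).restrictScalars F := by
    ext y
    simp only [LinearMap.mem_range, Submodule.restrictScalars_mem, Submodule.mem_span_singleton]
    exact ⟨fun ⟨a, ha⟩ => ⟨a, by rw [← happ a, ha]⟩, fun ⟨a, ha⟩ => ⟨a, by rw [happ a, ha]⟩⟩
  calc finrank F ↥(Submodule.comap f U)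
      = finrank F ↥(Submodule.map f (Submodule.comap f U)) :=
        (Submodule.equivMapOfInjective f hinj _).finrank_eq
    _ = finrank F ↥(U ⊓ (Submodule.span E {x}).restrictScalars F) := by
        rw [Submodule.map_comap_eq, hrange, inf_comm]

end Aux

lemma aux_filter_card {α : Type*} [Fintype α] (p : α → Prop) [DecidablePred p] :
    (Finset.univ.filter p).card = Nat.card {x // p x} := by
  rw [Nat.card_eq_fintype_card, Fintype.card_subtype]

lemma aux_card_ne {β : Type*} [Finite β] (b : β) :
    Nat.card {y : β // y ≠ b} = Nat.card β - 1 := by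
  classical
  letI : Fintype β := Fintype.ofFinite β
  rw [Nat.card_eq_fintype_card, Nat.card_eq_fintype_card]
  have h1 : Fintype.card {y : β // ¬ (y = b)} =
      Fintype.card β - Fintype.card {y : β // y = b} :=
    Fintype.card_subtype_compl _
  simpa [Fintype.card_subtype_eq] using h1

lemma aux_card_submodule {F M : Type*} [Field F] [Fintype F] [AddCommGroup M] [Module F M]
    [Finite M] (V : Submodule F M) :
    Nat.card ↥V = Fintype.card F ^ finrank F ↥V := by
  letI : Fintype ↥V := Fintype.ofFinite _
  rw [Nat.card_eq_fintype_card]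
  exact card_eq_pow_finrank

set_option synthInstance.maxHeartbeats 1000000 in
set_option maxHeartbeats 1000000 in
lemma aux_dvd_tower {F E : Type*} [Field F] [Field E] [Algebra F E]
    [FiniteDimensional F E] (Kf : IntermediateField F E) (Wk : Submodule ↥Kf E) :
    Module.finrank F ↥Kf ∣ Module.finrank F ↥(Wk.restrictScalars F) := by
  have htower := Module.finrank_mul_finrank F ↥Kf ↥Wk
  have heq : finrank F ↥(Wk.restrictScalars F) = finrank F ↥Wk :=
    ((Submodule.restrictScalarsEquiv F ↥Kf E Wk).restrictScalars F).finrank_eq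
  rw [heq]
  exact ⟨finrank ↥Kf ↥Wk, htower.symm⟩

lemma aux_dvd_field {F E : Type*} [Field F] [Field E] [Algebra F E]
    [FiniteDimensional F E] (Kf : IntermediateField F E) :
    Module.finrank F ↥Kf ∣ Module.finrank F E :=
  ⟨finrank ↥Kf E, (Module.finrank_mul_finrank F ↥Kf E).symm⟩

theorem stmt_13 (F E : Type*) [Field F] [Fintype F] [Field E] [Algebra F E]
    [FiniteDimensional F E] (q h k : ℕ) (hq : Fintype.card F = q)
    (hh : Module.finrank F E = h) (hk5 : 5 ≤ k) (hkh : k ≤ h)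
    (U : Submodule F (E × E)) (hU : Module.finrank F U = k)
    (v₀ : E × E) (hv₀U : v₀ ∈ U) (hv₀ : v₀ ≠ 0)
    (hv₀wt : Module.finrank F ↥(U ⊓ (Submodule.span E {v₀}).restrictScalars F) = k - 2)
    (hwt : ∀ u ∈ U, u ≠ 0 → u ∉ Submodule.span E {v₀} →
      Module.finrank F ↥(U ⊓ (Submodule.span E {u}).restrictScalars F) = 2) :
    ∃ s : ℕ, 1 < s ∧ s ∣ k - 2 ∧ s ∣ h ∧
      ∃ K : IntermediateField F E, Module.finrank F K = s := by
  classical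
  subst hq hh
  have hq2 : 2 ≤ Fintype.card F := Fintype.one_lt_card
  have hfinE : Finite E := Module.finite_of_finite F
  letI : Fintype E := Fintype.ofFinite E
  -- find u₀ ∈ U outside the E-line of v₀
  have hnotle : ¬ U ≤ (Submodule.span E {v₀}).restrictScalars F := by
    intro hle
    have h1 : U ⊓ (Submodule.span E {v₀}).restrictScalars F = U := inf_eq_left.mpr hle
    rw [h1, hU] at hv₀wt
    omega
  obtain ⟨u₀, hu₀U, hu₀S⟩ := SetLike.not_le_iff_exists.mp hnotle
  have hu₀span : u₀ ∉ Submodule.span E {v₀} := fun hmem =>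
    hu₀S ((Submodule.restrictScalars_mem F _ u₀).mpr hmem)
  have hu₀0 : u₀ ≠ 0 := by
    rintro rfl; exact hu₀span (Submodule.zero_mem _)
  -- E-linear independence of u₀ and v₀
  have hind : ∀ α β : E, α • u₀ + β • v₀ = 0 → α = 0 ∧ β = 0 := by
    intro α β hαβ
    by_cases hα : α = 0
    · subst hα
      refine ⟨rfl, ?_⟩
      rw [zero_smul, zero_add] at hαβ
      rcases smul_eq_zero.mp hαβ with hfoo | hfoo
      · exact hfoo
      · exact absurd hfoo hv₀
    · exfalso
      apply hu₀span
      have h2 : α • u₀ = (-β) • v₀ := by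
        rw [neg_smul]
        exact eq_neg_of_add_eq_zero_left hαβ
      have h3 : (α⁻¹ * (-β)) • v₀ = u₀ := by
        rw [← smul_smul, ← h2, smul_smul, inv_mul_cancel₀ hα, one_smul]
      exact Submodule.mem_span_singleton.mpr ⟨_, h3⟩
  -- the weight space of v₀ as scalars
  have hWrank : finrank F ↥(Submodule.comap
      ((LinearMap.toSpanSingleton E (E × E) v₀).restrictScalars F) U) = k - 2 :=
    (aux_comap_finrank U v₀ hv₀).trans hv₀wt
  have hWmem : ∀ w : E, w ∈ Submodule.comap
      ((LinearMap.toSpanSingleton E (E × E) v₀).restrictScalars F) U ↔ w • v₀ ∈ U := by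
    intro w
    simp [Submodule.mem_comap, LinearMap.toSpanSingleton_apply]
  -- a scalar λ₀ ∉ F with λ₀ • u₀ ∈ U
  obtain ⟨l₀, hl₀U, hl₀F⟩ : ∃ l₀ : E, l₀ • u₀ ∈ U ∧ l₀ ∉ Set.range (algebraMap F E) := by
    by_contra hcon
    push_neg at hcon
    have hT0rank : finrank F ↥(Submodule.comap
        ((LinearMap.toSpanSingleton E (E × E) u₀).restrictScalars F) U) = 2 :=
      (aux_comap_finrank U u₀ hu₀0).trans (hwt u₀ hu₀U hu₀0 hu₀span)
    have hle : Submodule.comap ((LinearMap.toSpanSingleton E (E × E) u₀).restrictScalars F) U ≤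
        Subalgebra.toSubmodule (⊥ : Subalgebra F E) := by
      intro z hz
      have hz' : z • u₀ ∈ U := by
        simpa [Submodule.mem_comap, LinearMap.toSpanSingleton_apply] using hz
      have := hcon z hz'
      simpa [Algebra.mem_bot] using this
    have hmono := Submodule.finrank_mono hle
    rw [hT0rank, Subalgebra.finrank_toSubmodule, Subalgebra.finrank_bot] at hmono
    omega
  have hl₀0 : l₀ ≠ 0 := fun h0 => hl₀F ⟨0, by rw [map_zero, h0]⟩
  -- Finsets for counting
  set P : E → Finset (E × E) := fun w => Finset.univ.filter
    (fun x => x ∈ U ∧ x ∈ Submodule.span E {u₀ + w • v₀} ∧ x ≠ 0) with hP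
  set WF : Finset E := Finset.univ.filter (fun w => w • v₀ ∈ U) with hWF
  set XF : Finset (E × E) := Finset.univ.filter
    (fun x => x ∈ U ∧ x ∉ Submodule.span E {v₀}) with hXF
  -- properties of u₀ + w • v₀
  have haw : ∀ w : E, w • v₀ ∈ U → (u₀ + w • v₀) ∈ U ∧ (u₀ + w • v₀) ≠ 0 ∧
      (u₀ + w • v₀) ∉ Submodule.span E {v₀} := by
    intro w hw
    refine ⟨U.add_mem hu₀U hw, ?_, ?_⟩
    · intro h0
      have h1 : (1 : E) • u₀ + w • v₀ = 0 := by rw [one_smul]; exact h0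
      exact one_ne_zero (hind 1 w h1).1
    · intro hsp
      apply hu₀span
      have h1 : u₀ = (u₀ + w • v₀) - w • v₀ := by rw [add_sub_cancel_right]
      rw [h1]
      exact Submodule.sub_mem _ hsp
        (Submodule.smul_mem _ w (Submodule.mem_span_singleton_self v₀))
  -- cardinality of each line piece
  have hPcard : ∀ w : E, w • v₀ ∈ U → (P w).card = Fintype.card F ^ 2 - 1 := by
    intro w hw
    obtain ⟨hmem, hne, hnsp⟩ := haw w hw
    have hwt2 := hwt _ hmem hne hnsp
    simp only [hP]
    rw [aux_filter_card]
    set Q := U ⊓ (Submodule.span E {u₀ + w • v₀}).restrictScalars F with hQ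
    have e : {x : E × E // x ∈ U ∧ x ∈ Submodule.span E {u₀ + w • v₀} ∧ x ≠ 0} ≃
        {y : ↥Q // (y : E × E) ≠ 0} :=
      { toFun := fun x => ⟨⟨x.1, Submodule.mem_inf.mpr
          ⟨x.2.1, (Submodule.restrictScalars_mem F _ _).mpr x.2.2.1⟩⟩, x.2.2.2⟩
        invFun := fun y => ⟨(y.1 : E × E), (Submodule.mem_inf.mp y.1.2).1,
          (Submodule.restrictScalars_mem F _ _).mp (Submodule.mem_inf.mp y.1.2).2, y.2⟩
        left_inv := fun x => rfl
        right_inv := fun y => rfl }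
    rw [Nat.card_congr e]
    have e2 : {y : ↥Q // (y : E × E) ≠ 0} ≃ {y : ↥Q // y ≠ 0} :=
      Equiv.subtypeEquivRight (fun y => by
        simp [ne_eq, ZeroMemClass.coe_eq_zero])
    rw [Nat.card_congr e2, aux_card_ne (0 : ↥Q), aux_card_submodule Q, hwt2]
  -- disjointness of line pieces
  have hdisj : ∀ w ∈ WF, ∀ w' ∈ WF, w ≠ w' → Disjoint (P w) (P w') := by
    intro w _ w' _ hne
    rw [Finset.disjoint_left]
    intro x hx hx'
    simp only [hP, Finset.mem_filter] at hx hx'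
    obtain ⟨-, hxU, hxsp, hx0⟩ := hx
    obtain ⟨-, -, hxsp', -⟩ := hx'
    obtain ⟨μ, hμ⟩ := Submodule.mem_span_singleton.mp hxsp
    obtain ⟨μ', hμ'⟩ := Submodule.mem_span_singleton.mp hxsp'
    have hμ0 : μ ≠ 0 := by
      rintro rfl; rw [zero_smul] at hμ; exact hx0 hμ.symm
    have hμeq : μ • u₀ + (μ * w) • v₀ = μ' • u₀ + (μ' * w') • v₀ := by
      have h1 := hμ.trans hμ'.symm
      rwa [smul_add, smul_add, smul_smul, smul_smul] at h1
    have heq : (μ - μ') • u₀ + (μ * w - μ' * w') • v₀ = 0 := by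
      rw [sub_smul, sub_smul]
      rw [show μ • u₀ = μ' • u₀ + (μ' * w') • v₀ - (μ * w) • v₀ by
        rw [← hμeq]; abel]
      abel
    obtain ⟨h1, h2⟩ := hind _ _ heq
    have hμμ : μ = μ' := sub_eq_zero.mp h1
    apply hne
    have h3 : μ * w = μ' * w' := sub_eq_zero.mp h2
    rw [← hμμ] at h3
    exact mul_left_cancel₀ hμ0 h3
  -- pieces are inside XF
  have hPsubX : ∀ w ∈ WF, P w ⊆ XF := by
    intro w hwWF x hx
    simp only [hP, Finset.mem_filter] at hx
    obtain ⟨-, hxU, hxsp, hx0⟩ := hx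
    simp only [hXF, Finset.mem_filter]
    refine ⟨Finset.mem_univ _, hxU, ?_⟩
    intro hxv
    obtain ⟨μ, hμ⟩ := Submodule.mem_span_singleton.mp hxsp
    obtain ⟨c, hc⟩ := Submodule.mem_span_singleton.mp hxv
    have hμ0 : μ ≠ 0 := by
      rintro rfl; rw [zero_smul] at hμ; exact hx0 hμ.symm
    have hμc : μ • u₀ + (μ * w) • v₀ = c • v₀ := by
      have h1 := hμ.trans hc.symm
      rwa [smul_add, smul_smul] at h1
    have heq : μ • u₀ + (μ * w - c) • v₀ = 0 := by
      rw [sub_smul]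
      rw [show μ • u₀ = c • v₀ - (μ * w) • v₀ by rw [← hμc]; abel]
      abel
    exact hμ0 (hind _ _ heq).1
  -- cardinalities
  have hWFcard : WF.card = Fintype.card F ^ (k - 2) := by
    simp only [hWF]
    rw [aux_filter_card]
    have e : {w : E // w • v₀ ∈ U} ≃
        ↥(Submodule.comap ((LinearMap.toSpanSingleton E (E × E) v₀).restrictScalars F) U) :=
      Equiv.subtypeEquivRight (fun w => (hWmem w).symm)
    rw [Nat.card_congr e, aux_card_submodule, hWrank]
  set B : Finset (E × E) := WF.biUnion P with hB
  have hBcard : B.card = Fintype.card F ^ (k - 2) * (Fintype.card F ^ 2 - 1) := by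
    rw [hB, Finset.card_biUnion hdisj]
    rw [Finset.sum_const_nat (fun w hw => hPcard w (by
      simpa only [hWF, Finset.mem_filter, Finset.mem_univ, true_and] using hw))]
    rw [hWFcard]
  have hXcard : XF.card = Fintype.card F ^ k - Fintype.card F ^ (k - 2) := by
    have hUF : (Finset.univ.filter (fun x : E × E => x ∈ U)).card = Fintype.card F ^ k := by
      rw [aux_filter_card]
      rw [show Nat.card {x : E × E // x ∈ U} = Nat.card ↥U from rfl]
      rw [aux_card_submodule U, hU]
    have hIF : (Finset.univ.filter
        (fun x : E × E => x ∈ U ∧ x ∈ Submodule.span E {v₀})).card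
        = Fintype.card F ^ (k - 2) := by
      rw [aux_filter_card]
      have e : {x : E × E // x ∈ U ∧ x ∈ Submodule.span E {v₀}} ≃
          ↥(U ⊓ (Submodule.span E {v₀}).restrictScalars F) :=
        Equiv.subtypeEquivRight (fun x => by
          simp [Submodule.mem_inf, Submodule.restrictScalars_mem])
      rw [Nat.card_congr e, aux_card_submodule, hv₀wt]
    have hsplit : XF = (Finset.univ.filter (fun x : E × E => x ∈ U)) \
        (Finset.univ.filter (fun x : E × E => x ∈ U ∧ x ∈ Submodule.span E {v₀})) := by
      ext x
      simp only [hXF, Finset.mem_filter, Finset.mem_sdiff, Finset.mem_univ, true_and]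
      tauto
    rw [hsplit, Finset.card_sdiff_of_subset (by
      intro x hx
      simp only [Finset.mem_filter, Finset.mem_univ, true_and] at hx ⊢
      exact hx.1), hUF, hIF]
  have harith : Fintype.card F ^ (k - 2) * (Fintype.card F ^ 2 - 1)
      = Fintype.card F ^ k - Fintype.card F ^ (k - 2) := by
    have hpow : Fintype.card F ^ k = Fintype.card F ^ (k - 2) * Fintype.card F ^ 2 := by
      rw [← pow_add]; congr 1; omega
    rw [hpow, Nat.mul_sub, Nat.mul_one]
  have hBX : B = XF := by
    apply Finset.eq_of_subset_of_card_le
    · intro x hx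
      obtain ⟨w, hw, hxw⟩ := Finset.mem_biUnion.mp hx
      exact hPsubX w hw hxw
    · rw [hBcard, hXcard, harith]
  -- the key stabilization property
  have hkey : ∀ w : E, w • v₀ ∈ U → (l₀⁻¹ * w) • v₀ ∈ U := by
    intro w hw
    have hxU : (l₀ • u₀ + w • v₀) ∈ U := U.add_mem hl₀U hw
    have hxX : (l₀ • u₀ + w • v₀) ∈ XF := by
      simp only [hXF, Finset.mem_filter]
      refine ⟨Finset.mem_univ _, hxU, ?_⟩
      intro hsp
      obtain ⟨c, hc⟩ := Submodule.mem_span_singleton.mp hsp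
      have heq : l₀ • u₀ + (w - c) • v₀ = 0 := by
        rw [sub_smul]
        rw [show l₀ • u₀ = c • v₀ - w • v₀ by rw [hc]; abel]
        abel
      exact hl₀0 (hind _ _ heq).1
    rw [← hBX] at hxX
    obtain ⟨w', hw'WF, hxP⟩ := Finset.mem_biUnion.mp hxX
    simp only [hP, Finset.mem_filter] at hxP
    obtain ⟨-, -, hsp, -⟩ := hxP
    obtain ⟨μ, hμ⟩ := Submodule.mem_span_singleton.mp hsp
    have hμeq : μ • u₀ + (μ * w') • v₀ = l₀ • u₀ + w • v₀ := by
      rw [← hμ, smul_add, smul_smul]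
    have heq : (μ - l₀) • u₀ + (μ * w' - w) • v₀ = 0 := by
      rw [sub_smul, sub_smul]
      rw [show μ • u₀ = l₀ • u₀ + w • v₀ - (μ * w') • v₀ by rw [← hμeq]; abel]
      abel
    obtain ⟨h1, h2⟩ := hind _ _ heq
    have hμl : μ = l₀ := sub_eq_zero.mp h1
    have hww : l₀ * w' = w := by rw [← hμl]; exact sub_eq_zero.mp h2
    have hinv : l₀⁻¹ * w = w' := by rw [← hww, inv_mul_cancel_left₀ hl₀0]
    rw [hinv]
    simpa only [hWF, Finset.mem_filter, Finset.mem_univ, true_and] using hw'WF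
  -- the stabilizer subalgebra
  obtain ⟨K, hmemK⟩ : ∃ K : Subalgebra F E,
      ∀ c : E, c ∈ K ↔ ∀ w : E, w • v₀ ∈ U → (c * w) • v₀ ∈ U :=
    ⟨
    { carrier := {c : E | ∀ w : E, w • v₀ ∈ U → (c * w) • v₀ ∈ U}
      mul_mem' := fun {a b} ha hb w hw => by
        rw [mul_assoc]; exact ha _ (hb _ hw)
      one_mem' := fun w hw => by rw [one_mul]; exact hw
      add_mem' := fun {a b} ha hb w hw => by
        rw [add_mul, add_smul]; exact U.add_mem (ha w hw) (hb w hw)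
      zero_mem' := fun w hw => by rw [zero_mul, zero_smul]; exact U.zero_mem
      algebraMap_mem' := fun c w hw => by
        rw [← Algebra.smul_def, smul_assoc]
        exact U.smul_mem c hw }, fun c => Iff.rfl⟩
  have hlinvK : l₀⁻¹ ∈ K := by
    rw [hmemK]
    intro w hw
    exact hkey w hw
  have hlinvF : l₀⁻¹ ∉ Set.range (algebraMap F E) := by
    rintro ⟨c, hc⟩
    apply hl₀F
    exact ⟨c⁻¹, by rw [map_inv₀, hc, inv_inv]⟩
  haveI : Algebra.IsAlgebraic F E := Algebra.IsAlgebraic.of_finite F E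
  obtain ⟨Kf, hmemKf⟩ : ∃ Kf : IntermediateField F E, ∀ c : E, c ∈ Kf ↔ c ∈ K :=
    ⟨K.toIntermediateField (fun x hx =>
      K.inv_mem_of_algebraic (Algebra.IsAlgebraic.isAlgebraic ((⟨x, hx⟩ : K) : E))),
      fun c => Iff.rfl⟩
  refine ⟨finrank F ↥Kf, ?_, ?_, ?_, Kf, rfl⟩
  · -- 1 < s
    have h1 : finrank F ↥Kf ≠ 1 := by
      intro h1
      have hbot : Kf = ⊥ := IntermediateField.finrank_eq_one_iff.mp h1
      have hmem : l₀⁻¹ ∈ (⊥ : IntermediateField F E) := by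
        rw [← hbot, hmemKf]; exact hlinvK
      exact hlinvF (IntermediateField.mem_bot.mp hmem)
    have h0 : 0 < finrank F ↥Kf := Module.finrank_pos
    omega
  · -- s ∣ k - 2
    obtain ⟨Wk, hmemWk⟩ : ∃ Wk : Submodule ↥Kf E, ∀ w : E, w ∈ Wk ↔ w • v₀ ∈ U :=
      ⟨{ carrier := {w : E | w • v₀ ∈ U},
         add_mem' := fun {a b} ha hb => by
           rw [Set.mem_setOf_eq, add_smul]; exact U.add_mem ha hb,
         zero_mem' := by
           rw [Set.mem_setOf_eq, zero_smul]; exact U.zero_mem,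
         smul_mem' := fun c x hx => by
           rw [Set.mem_setOf_eq]
           have hcx : (c • x : E) = (c : E) * x := by
             rw [Algebra.smul_def, IntermediateField.algebraMap_apply]
           rw [hcx]
           exact (hmemK (c : E)).mp ((hmemKf (c : E)).mp c.2) x hx }, fun w => Iff.rfl⟩
    have hrestrict : Wk.restrictScalars F = Submodule.comap
        ((LinearMap.toSpanSingleton E (E × E) v₀).restrictScalars F) U := by
      ext w
      rw [Submodule.restrictScalars_mem, hWmem, hmemWk]
    have hdvd := aux_dvd_tower Kf Wk
    rw [hrestrict, hWrank] at hdvd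
    exact hdvd
  · -- s ∣ h
    exact aux_dvd_field Kf
end

section
/- Let F be a field, E a field extension of F, K an intermediate field of E/F, α ∈ K with K = F(α) (K is generated over F by α), r ≥ 1, and c : Fin r → E any family of elements of E. Let U be the F-subspace of E × E consisting of all vectors (∑_{i} c i · γ i, λ₂ + α · λ₁) with γ : Fin r → K and λ₁, λ₂ ∈ F (scalars viewed in E via the algebra maps), and let W be the F-subspace of E × E consisting of all vectors (∑_{i} c i · γ i, δ) with γ : Fin r → K and δ ∈ K. Then W is K-linear and L_U = L_W; in particular, the F-linear set L_U has geometric field of linearity K. -/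
/-- The `F`-linear set of projective points of `PG(1,E)` determined by the `F`-subspace `U`
of `E × E`: the `E`-spans of the nonzero vectors of `U`. -/
def LSet (F : Type*) {E : Type*} [Field F] [Field E] [Algebra F E]
    (U : Submodule F (E × E)) : Set (Submodule E (E × E)) :=
  {p | ∃ u ∈ U, u ≠ 0 ∧ p = Submodule.span E {u}}

theorem stmt_14 (F E : Type*) [Field F] [Field E] [Algebra F E]
    (K : IntermediateField F E) (α : E) (hαK : α ∈ K)
    (hK : K = IntermediateField.adjoin F {α})
    (r : ℕ) (hr : 1 ≤ r) (c : Fin r → E)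
    (U : Submodule F (E × E))
    (hUset : (U : Set (E × E)) =
      {p | ∃ γ : Fin r → K, ∃ l₁ l₂ : F,
        p = (∑ i, c i * (γ i : E), algebraMap F E l₂ + α * algebraMap F E l₁)})
    (W : Submodule F (E × E))
    (hWset : (W : Set (E × E)) =
      {p | ∃ γ : Fin r → K, ∃ δ : K, p = (∑ i, c i * (γ i : E), (δ : E))}) :
    (∀ x ∈ K, ∀ w ∈ W, x • w ∈ W) ∧ LSet F W = LSet F U := by
  have hUW : ∀ u, u ∈ U → u ∈ W := by
    intro u hu
    have hu' : u ∈ (U : Set (E × E)) := hu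
    rw [hUset] at hu'
    obtain ⟨γ, l₁, l₂, rfl⟩ := hu'
    have : (∑ i, c i * (γ i : E), algebraMap F E l₂ + α * algebraMap F E l₁)
        ∈ (W : Set (E × E)) := by
      rw [hWset]
      exact ⟨γ, ⟨algebraMap F E l₂ + α * algebraMap F E l₁,
        K.add_mem (K.algebraMap_mem l₂) (K.mul_mem hαK (K.algebraMap_mem l₁))⟩, rfl⟩
    exact this
  constructor
  · intro x hx w hw
    have hw' : w ∈ (W : Set (E × E)) := hw
    rw [hWset] at hw'
    obtain ⟨γ, δ, rfl⟩ := hw'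
    have : x • ((∑ i, c i * (γ i : E)), (δ : E)) ∈ (W : Set (E × E)) := by
      rw [hWset]
      refine ⟨fun i => ⟨x, hx⟩ * γ i, ⟨x, hx⟩ * δ, ?_⟩
      have : x • ((∑ i, c i * (γ i : E)), (δ : E))
          = (x * ∑ i, c i * (γ i : E), x * (δ : E)) := rfl
      rw [this, Finset.mul_sum]
      refine Prod.ext ?_ rfl
      simp only [MulMemClass.coe_mul]
      exact Finset.sum_congr rfl fun i _ => by ring
    exact this
  · ext p
    constructor
    · rintro ⟨w, hwW, hw0, rfl⟩
      have hw' : w ∈ (W : Set (E × E)) := hwW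
      rw [hWset] at hw'
      obtain ⟨γ, δ, rfl⟩ := hw'
      by_cases hδ : (δ : E) = 0
      · refine ⟨_, ?_, hw0, rfl⟩
        show _ ∈ (U : Set (E × E))
        rw [hUset]
        exact ⟨γ, 0, 0, by simp [hδ]⟩
      · refine ⟨(δ : E)⁻¹ • ((∑ i, c i * (γ i : E)), (δ : E)), ?_, ?_, ?_⟩
        · show _ ∈ (U : Set (E × E))
          rw [hUset]
          refine ⟨fun i => δ⁻¹ * γ i, 0, 1, ?_⟩
          have h1 : (δ : E)⁻¹ • ((∑ i, c i * (γ i : E)), (δ : E))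
              = ((δ : E)⁻¹ * ∑ i, c i * (γ i : E), (δ : E)⁻¹ * (δ : E)) := rfl
          rw [h1, Finset.mul_sum, inv_mul_cancel₀ hδ]
          refine Prod.ext ?_ (by simp)
          simp only [MulMemClass.coe_mul]
          refine Finset.sum_congr rfl fun i _ => ?_
          have : ((δ⁻¹ : K) : E) = ((δ : E))⁻¹ := by
            norm_cast
          rw [this]; ring
        · simp only [ne_eq, smul_eq_zero, inv_eq_zero, hδ, false_or]
          exact hw0
        · rw [Submodule.span_singleton_smul_eq
            (IsUnit.mk0 _ (inv_ne_zero hδ))]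
    · rintro ⟨u, huU, hu0, rfl⟩
      exact ⟨u, hUW u huU, hu0, rfl⟩
end

section
/- Let F be a finite field with exactly q elements, E a field extension of F of finite degree, K an intermediate field of E/F with [K : F] = s, α ∈ K not in the image of F with K = F(α), r ≥ 1, and c : Fin r → E a family that is linearly independent over K. Let U be the F-subspace of E × E consisting of all vectors (∑_{i} c i · γ i, λ₂ + α · λ₁) with γ : Fin r → K and λ₁, λ₂ ∈ F. Then dim_F U = r·s + 2, the F-linear set L_U has exactly q^{r·s} + 1 points, the point spanned by (1, 0) belongs to L_U and has weight r·s with respect to U, and every other point of L_U has weight 2 with respect to U. (This shows the linear sets produced by the paper's Construction are linear sets of rank r·s + 2 with one point of weight r·s and all other points of weight 2.) -/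
/-- Auxiliary: the product of two submodules is linearly equivalent to the
product of the two subtypes. -/
def prodSubEquiv {R M N : Type*} [Ring R] [AddCommGroup M] [AddCommGroup N]
    [Module R M] [Module R N] (p : Submodule R M) (q : Submodule R N) :
    ↥(p.prod q) ≃ₗ[R] ↥p × ↥q where
  toFun x := (⟨x.1.1, x.2.1⟩, ⟨x.1.2, x.2.2⟩)
  invFun y := ⟨(y.1.1, y.2.1), y.1.2, y.2.2⟩
  left_inv _ := rfl
  right_inv _ := rfl
  map_add' _ _ := rfl
  map_smul' _ _ := rfl

set_option maxHeartbeats 1000000 in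
set_option synthInstance.maxHeartbeats 1000000 in
theorem stmt_15 (F E : Type*) [Field F] [Fintype F] [Field E] [Algebra F E]
    [FiniteDimensional F E] (q : ℕ) (hq : Fintype.card F = q)
    (K : IntermediateField F E) (s : ℕ) (hs : Module.finrank F K = s)
    (α : E) (hαK : α ∈ K) (hα : α ∉ Set.range (algebraMap F E))
    (hK : K = IntermediateField.adjoin F {α})
    (r : ℕ) (hr : 1 ≤ r) (c : Fin r → E) (hc : LinearIndependent K c)
    (U : Submodule F (E × E))
    (hUset : (U : Set (E × E)) =
      {p | ∃ γ : Fin r → K, ∃ l₁ l₂ : F,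
        p = (∑ i, c i * (γ i : E), algebraMap F E l₂ + α * algebraMap F E l₁)}) :
    Module.finrank F U = r * s + 2 ∧
    (LSet F U).ncard = q ^ (r * s) + 1 ∧
    Submodule.span E {((1 : E), (0 : E))} ∈ LSet F U ∧
    Module.finrank F
      ↥(U ⊓ (Submodule.span E {((1 : E), (0 : E))}).restrictScalars F) = r * s ∧
    ∀ u ∈ U, u ≠ 0 → u ∉ Submodule.span E {((1 : E), (0 : E))} →
      Module.finrank F ↥(U ⊓ (Submodule.span E {u}).restrictScalars F) = 2 := by
  classical
  have hEfin : Finite E := Module.finite_of_finite F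
  -- 1 and α are linearly independent over F
  have hpair : LinearIndependent F ![(1 : E), α] := by
    rw [LinearIndependent.pair_iff]
    intro a b hab
    have hab' : algebraMap F E a + algebraMap F E b * α = 0 := by
      simpa [Algebra.smul_def] using hab
    rcases eq_or_ne b 0 with hb | hb
    · subst hb
      have ha : algebraMap F E a = 0 := by simpa using hab'
      exact ⟨(algebraMap F E).injective (by simpa using ha), rfl⟩
    · exfalso
      apply hα
      refine ⟨-(a / b), ?_⟩
      have hbne : algebraMap F E b ≠ 0 := fun h =>
        hb ((algebraMap F E).injective (by simpa using h))
      rw [map_neg, map_div₀, neg_eq_iff_eq_neg, div_eq_iff hbne]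
      linear_combination hab'
  set W : Submodule F E := Submodule.span F {(1 : E), α} with hWdef
  have hWmem : ∀ y : E, y ∈ W ↔
      ∃ l₁ l₂ : F, y = algebraMap F E l₂ + α * algebraMap F E l₁ := by
    intro y
    rw [hWdef, Submodule.mem_span_pair]
    constructor
    · rintro ⟨a, b, rfl⟩
      exact ⟨b, a, by simp [Algebra.smul_def]; ring⟩
    · rintro ⟨l₁, l₂, rfl⟩
      exact ⟨l₂, l₁, by simp [Algebra.smul_def]; ring⟩
  have hWle : ∀ y ∈ W, y ∈ K := by
    intro y hy
    obtain ⟨l₁, l₂, rfl⟩ := (hWmem y).mp hy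
    exact K.add_mem (K.algebraMap_mem l₂) (K.mul_mem hαK (K.algebraMap_mem l₁))
  have hWrank : Module.finrank F ↥W = 2 := by
    have hset : ({(1 : E), α} : Set E) = Set.range ![(1 : E), α] := by
      ext x
      simp [Matrix.range_cons, Matrix.range_empty, or_comm]
    rw [hWdef, hset, finrank_span_eq_card hpair, Fintype.card_fin]
  set C : Submodule K E := Submodule.span K (Set.range c) with hCdef
  have hCmem : ∀ x : E, x ∈ C ↔ ∃ γ : Fin r → K, x = ∑ i, c i * (γ i : E) := by
    intro x
    rw [hCdef, Submodule.mem_span_range_iff_exists_fun]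
    constructor
    · rintro ⟨γ, rfl⟩
      exact ⟨γ, by simp [IntermediateField.smul_def, smul_eq_mul, mul_comm]⟩
    · rintro ⟨γ, rfl⟩
      exact ⟨γ, by simp [IntermediateField.smul_def, smul_eq_mul, mul_comm]⟩
  set Cf : Submodule F E := C.restrictScalars F with hCfdef
  have hU : U = Cf.prod W := by
    ext v
    have hv : v ∈ U ↔ v ∈ (U : Set (E × E)) := Iff.rfl
    rw [hv, hUset, Submodule.mem_prod]
    constructor
    · rintro ⟨γ, l₁, l₂, rfl⟩
      exact ⟨(hCmem _).mpr ⟨γ, rfl⟩, (hWmem _).mpr ⟨l₁, l₂, rfl⟩⟩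
    · rintro ⟨h1, h2⟩
      obtain ⟨γ, hγ⟩ := (hCmem v.1).mp h1
      obtain ⟨l₁, l₂, hl⟩ := (hWmem v.2).mp h2
      exact ⟨γ, l₁, l₂, Prod.ext hγ hl⟩
  have hCrank : Module.finrank F ↥Cf = r * s := by
    have t1 : Module.finrank K ↥C = r := by
      rw [hCdef, finrank_span_eq_card hc, Fintype.card_fin]
    have t2 : Module.finrank F ↥K * Module.finrank K ↥C = Module.finrank F ↥C :=
      Module.finrank_mul_finrank F ↥K ↥C
    have t3 : Module.finrank F ↥Cf = Module.finrank F ↥C :=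
      ((Submodule.restrictScalarsEquiv F K E C).restrictScalars F).finrank_eq
    rw [t3, ← t2, t1, hs, mul_comm]
  -- rank of U
  have hUrank : Module.finrank F ↥U = r * s + 2 := by
    have e1 : ↥U ≃ₗ[F] ↥Cf × ↥W := by rw [hU]; exact prodSubEquiv Cf W
    rw [e1.finrank_eq, Module.finrank_prod, hCrank, hWrank]
  -- description of the span of (1,0)
  have hspan10 : ∀ v : E × E, v ∈ Submodule.span E {((1 : E), (0 : E))} ↔ v.2 = 0 := by
    intro v
    rw [Submodule.mem_span_singleton]
    constructor
    · rintro ⟨t, rfl⟩; simp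
    · intro h
      refine ⟨v.1, ?_⟩
      have : v = (v.1, v.2) := rfl
      rw [this, h]
      simp [Prod.smul_def]
  -- membership of span (1,0) in LSet
  have hc0 : c ⟨0, hr⟩ ≠ 0 := hc.ne_zero ⟨0, hr⟩
  have hmemL : Submodule.span E {((1 : E), (0 : E))} ∈ LSet F U := by
    refine ⟨(c ⟨0, hr⟩, 0), ?_, ?_, ?_⟩
    · rw [hU, Submodule.mem_prod]
      exact ⟨Submodule.subset_span (Set.mem_range_self _), W.zero_mem⟩
    · simp [Prod.ext_iff, hc0]
    · have : (c ⟨0, hr⟩, (0 : E)) = c ⟨0, hr⟩ • ((1 : E), (0 : E)) := by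
        simp [Prod.smul_def]
      rw [this, Submodule.span_singleton_smul_eq (IsUnit.mk0 _ hc0)]
  -- weight of (1,0)
  have hw10 : Module.finrank F
      ↥(U ⊓ (Submodule.span E {((1 : E), (0 : E))}).restrictScalars F) = r * s := by
    have heq : U ⊓ (Submodule.span E {((1 : E), (0 : E))}).restrictScalars F
        = Cf.prod (⊥ : Submodule F E) := by
      ext v
      rw [Submodule.mem_inf, hU, Submodule.mem_prod, Submodule.mem_prod]
      have hv : v ∈ (Submodule.span E {((1 : E), (0 : E))}).restrictScalars F ↔ v.2 = 0 :=
        hspan10 v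
      rw [hv, Submodule.mem_bot]
      constructor
      · rintro ⟨⟨h1, _⟩, h3⟩; exact ⟨h1, h3⟩
      · rintro ⟨h1, h3⟩
        exact ⟨⟨h1, by rw [h3]; exact W.zero_mem⟩, h3⟩
    rw [heq]
    have e1 : ↥(Cf.prod (⊥ : Submodule F E)) ≃ₗ[F] ↥Cf × ↥(⊥ : Submodule F E) :=
      prodSubEquiv Cf ⊥
    rw [e1.finrank_eq, Module.finrank_prod, hCrank, finrank_bot, Nat.add_zero]
  -- weight of other points
  have hw2 : ∀ u ∈ U, u ≠ 0 → u ∉ Submodule.span E {((1 : E), (0 : E))} →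
      Module.finrank F ↥(U ⊓ (Submodule.span E {u}).restrictScalars F) = 2 := by
    intro u huU hu0 huns
    have hy : u.2 ≠ 0 := fun h => huns ((hspan10 u).mpr h)
    have huC : u.1 ∈ C ∧ u.2 ∈ W := by
      rw [hU, Submodule.mem_prod] at huU; exact huU
    have hyK : u.2 ∈ K := hWle _ huC.2
    set φ : E →ₗ[F] E × E :=
      ((LinearMap.toSpanSingleton E (E × E) u).restrictScalars F).comp
        (LinearMap.mulLeft F u.2⁻¹) with hφdef
    have hφ : ∀ t : E, φ t = (u.2⁻¹ * t) • u := fun t => rfl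
    have hφinj : Function.Injective φ := by
      intro a b hab
      rw [hφ, hφ] at hab
      have h := sub_eq_zero_of_eq hab
      rw [← sub_smul, smul_eq_zero] at h
      rcases h with h | h
      · rw [← mul_sub, mul_eq_zero] at h
        rcases h with h | h
        · exact absurd h (inv_ne_zero hy)
        · exact sub_eq_zero.mp h
      · exact absurd h hu0
    have heq : U ⊓ (Submodule.span E {u}).restrictScalars F = Submodule.map φ W := by
      apply le_antisymm
      · intro v hv
        obtain ⟨hvU, hvs⟩ := Submodule.mem_inf.mp hv
        have hvs' : v ∈ Submodule.span E {u} := hvs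
        obtain ⟨t, rfl⟩ := Submodule.mem_span_singleton.mp hvs'
        have hv2 : t * u.2 ∈ W := by
          rw [hU, Submodule.mem_prod] at hvU
          simpa [Prod.smul_def, smul_eq_mul] using hvU.2
        refine ⟨t * u.2, hv2, ?_⟩
        rw [hφ]
        congr 1
        field_simp
      · rintro v ⟨t, htW, rfl⟩
        refine Submodule.mem_inf.mpr ⟨?_, ?_⟩
        · rw [hφ, hU]
          refine Submodule.mem_prod.mpr ⟨?_, ?_⟩
          · show ((u.2⁻¹ * t) • u).1 ∈ Cf
            have hk : u.2⁻¹ * t ∈ K := K.mul_mem (K.inv_mem hyK) (hWle _ htW)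
            have h1 : ((u.2⁻¹ * t) • u).1 = (u.2⁻¹ * t) * u.1 := rfl
            rw [h1]
            have := C.smul_mem ⟨u.2⁻¹ * t, hk⟩ huC.1
            rw [hCfdef, Submodule.restrictScalars_mem]
            simpa [IntermediateField.smul_def, smul_eq_mul] using this
          · show ((u.2⁻¹ * t) • u).2 ∈ W
            have h2 : ((u.2⁻¹ * t) • u).2 = (u.2⁻¹ * t) * u.2 := rfl
            have h3 : (u.2⁻¹ * t) * u.2 = t := by field_simp
            rw [h2, h3]; exact htW
        · show φ t ∈ Submodule.span E {u}
          rw [hφ]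
          exact Submodule.smul_mem _ _ (Submodule.mem_span_singleton_self u)
    rw [heq, ← (Submodule.equivMapOfInjective φ hφinj W).finrank_eq, hWrank]
  -- counting the points
  have hcard : (LSet F U).ncard = q ^ (r * s) + 1 := by
    set g : ↥Cf → Submodule E (E × E) := fun z => Submodule.span E {((z : E), (1 : E))}
      with hgdef
    have hrep : ∀ z : ↥Cf, ∀ v : E × E, v ∈ g z ↔ ∃ t : E, v = (t * (z : E), t) := by
      intro z v
      rw [hgdef, Submodule.mem_span_singleton]
      constructor
      · rintro ⟨t, rfl⟩; exact ⟨t, by simp [Prod.smul_def]⟩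
      · rintro ⟨t, rfl⟩; exact ⟨t, by simp [Prod.smul_def]⟩
    have hginj : Function.Injective g := by
      intro z z' h
      have : ((z : E), (1 : E)) ∈ g z' := by
        rw [← h]; exact Submodule.mem_span_singleton_self _
      obtain ⟨t, ht⟩ := (hrep z' _).mp this
      have ht2 : (1 : E) = t := congrArg Prod.snd ht
      have ht1 : (z : E) = t * (z' : E) := congrArg Prod.fst ht
      ext
      rw [ht1, ← ht2, one_mul]
    have hnm : Submodule.span E {((1 : E), (0 : E))} ∉ Set.range g := by
      rintro ⟨z, hz⟩
      have : ((1 : E), (0 : E)) ∈ g z := by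
        rw [hz]; exact Submodule.mem_span_singleton_self _
      obtain ⟨t, ht⟩ := (hrep z _).mp this
      have ht2 : (0 : E) = t := congrArg Prod.snd ht
      have ht1 : (1 : E) = t * (z : E) := congrArg Prod.fst ht
      rw [← ht2, zero_mul] at ht1
      exact one_ne_zero ht1
    have hset : LSet F U = insert (Submodule.span E {((1 : E), (0 : E))}) (Set.range g) := by
      ext p
      constructor
      · rintro ⟨u, huU, hu0, rfl⟩
        by_cases h2 : u.2 = 0
        · left
          have h1 : u.1 ≠ 0 := by
            intro h1
            apply hu0
            ext
            · exact h1
            · exact h2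
          have : u = u.1 • ((1 : E), (0 : E)) := by
            ext <;> simp [Prod.smul_def, h2]
          rw [this, Submodule.span_singleton_smul_eq (IsUnit.mk0 _ h1)]
        · right
          have huC : u.1 ∈ C ∧ u.2 ∈ W := by
            rw [hU, Submodule.mem_prod] at huU; exact huU
          have hyK : u.2 ∈ K := hWle _ huC.2
          have hzC : u.2⁻¹ * u.1 ∈ Cf := by
            rw [hCfdef, Submodule.restrictScalars_mem]
            have := C.smul_mem ⟨u.2⁻¹, K.inv_mem hyK⟩ huC.1
            simpa [IntermediateField.smul_def, smul_eq_mul] using this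
          refine ⟨⟨u.2⁻¹ * u.1, hzC⟩, ?_⟩
          rw [hgdef]
          have : u = u.2 • ((u.2⁻¹ * u.1 : E), (1 : E)) := by
            ext
            · show u.1 = u.2 * (u.2⁻¹ * u.1)
              field_simp
            · show u.2 = u.2 * 1
              rw [mul_one]
          conv_rhs => rw [this]
          rw [Submodule.span_singleton_smul_eq (IsUnit.mk0 _ h2)]
      · rintro (rfl | ⟨z, rfl⟩)
        · exact hmemL
        · refine ⟨((z : E), (1 : E)), ?_, ?_, rfl⟩
          · rw [hU, Submodule.mem_prod]
            exact ⟨z.2, Submodule.subset_span (by simp)⟩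
          · intro h
            exact one_ne_zero (congrArg Prod.snd h)
      -- done
    rw [hset, Set.ncard_insert_of_notMem hnm (Set.toFinite _)]
    congr 1
    have hCfin : Finite ↥Cf := Subtype.finite
    have : Fintype ↥Cf := Fintype.ofFinite ↥Cf
    rw [← Nat.card_coe_set_eq, Nat.card_range_of_injective hginj,
      Nat.card_eq_fintype_card, Module.card_eq_pow_finrank (K := F) (V := ↥Cf), hq, hCrank]
  exact ⟨hUrank, hcard, hmemL, hw10, hw2⟩
end

section
/- Let F be a finite field with exactly q elements, E a field extension of F of finite degree h, and U an F-subspace of E × E with dim_F U = k, where 5 ≤ k ≤ h. Suppose there is a nonzero v₀ ∈ U with dim_F (U ∩ span_E{v₀}) = k − 2, and that every nonzero u ∈ U with u ∉ span_E{v₀} satisfies dim_F (U ∩ span_E{u}) = 2 (one point of weight k − 2, all other points of weight 2). Then there exist an intermediate field K of E/F and a K-linear F-subspace W of E × E with L_W = L_U, such that s := [K : F] satisfies s > 1 and s divides k − 2; i.e. L_U has geometric field of linearity K with 1 < [K : F] dividing k − 2. -/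
section aux
variable {F : Type*} {E : Type*} [Field F] [Field E] [Algebra F E]

/-- The linear functional on `E × E` with kernel `span {v₀}`. -/
def yfun (v₀ : E × E) : (E × E) →ₗ[E] E where
  toFun v := v₀.2 * v.1 - v₀.1 * v.2
  map_add' u v := by simp only [Prod.fst_add, Prod.snd_add]; ring
  map_smul' c v := by simp only [Prod.smul_fst, Prod.smul_snd, smul_eq_mul, RingHom.id_apply]; ring

lemma yfun_apply (v₀ v : E × E) : yfun v₀ v = v₀.2 * v.1 - v₀.1 * v.2 := rfl

lemma yfun_eq_zero_iff {v₀ : E × E} (h : v₀ ≠ 0) {v : E × E} :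
    yfun v₀ v = 0 ↔ v ∈ Submodule.span E {v₀} := by
  rw [Submodule.mem_span_singleton, yfun_apply]
  constructor
  · intro hy
    have hy' : v₀.2 * v.1 = v₀.1 * v.2 := sub_eq_zero.mp hy
    by_cases h1 : v₀.1 = 0
    · have h2 : v₀.2 ≠ 0 := by
        intro h2; exact h (Prod.ext h1 h2)
      have hv1 : v.1 = 0 := by
        rw [h1, zero_mul] at hy'
        exact (mul_eq_zero.mp hy').resolve_left h2
      refine ⟨v.2 / v₀.2, ?_⟩
      apply Prod.ext <;> simp [h1, hv1, smul_eq_mul, div_mul_cancel₀, h2]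
    · refine ⟨v.1 / v₀.1, ?_⟩
      apply Prod.ext
      · simp [smul_eq_mul, div_mul_cancel₀, h1]
      · simp only [Prod.smul_snd, smul_eq_mul]
        field_simp
        linear_combination hy'
  · rintro ⟨a, rfl⟩
    simp only [Prod.smul_fst, Prod.smul_snd, smul_eq_mul]
    ring

end aux

section aux2
variable (F : Type*) (E : Type*) {M : Type*} [Field F] [Field E] [Algebra F E]
  [AddCommGroup M] [Module E M] [Module F M] [IsScalarTower F E M]

/-- The set of scalars `l : E` with `l • u ∈ U`, as an `F`-subspace of `E`. -/
def stabSub (U : Submodule F M) (u : M) : Submodule F E where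
  carrier := {l | l • u ∈ U}
  zero_mem' := by simp
  add_mem' := by
    intro a b ha hb
    simp only [Set.mem_setOf_eq, add_smul] at *
    exact U.add_mem ha hb
  smul_mem' := by
    intro r l hl
    simp only [Set.mem_setOf_eq] at *
    rw [smul_assoc]
    exact U.smul_mem r hl

lemma mem_stabSub {U : Submodule F M} {u : M} {l : E} : l ∈ stabSub F E U u ↔ l • u ∈ U := Iff.rfl

lemma stabSub_finrank [NoZeroSMulDivisors E M] (U : Submodule F M) {u : M} (hu : u ≠ 0) :
    Module.finrank F (stabSub F E U u) =
      Module.finrank F ↥(U ⊓ (Submodule.span E {u}).restrictScalars F) := by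
  set f0 : ↥(stabSub F E U u) →ₗ[F] M :=
    ((LinearMap.toSpanSingleton E M u).restrictScalars F).comp (Submodule.subtype _) with hf0
  have hf0app : ∀ l : ↥(stabSub F E U u), f0 l = (l : E) • u := fun l => rfl
  have hmem : ∀ l : ↥(stabSub F E U u),
      f0 l ∈ U ⊓ (Submodule.span E {u}).restrictScalars F := by
    intro l
    refine ⟨l.2, ?_⟩
    simp only [hf0app, Submodule.restrictScalars_mem]
    exact Submodule.smul_mem _ _ (Submodule.mem_span_singleton_self u)
  refine LinearEquiv.finrank_eq (LinearEquiv.ofBijective (f0.codRestrict _ hmem) ⟨?_, ?_⟩)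
  · intro a b hab
    have h1 : (a : E) • u = (b : E) • u := congrArg Subtype.val hab
    have h2 : ((a : E) - b) • u = 0 := by rw [sub_smul, h1, sub_self]
    rcases smul_eq_zero.mp h2 with hh | hh
    · exact Subtype.ext (sub_eq_zero.mp hh)
    · exact absurd hh hu
  · rintro ⟨v, hvU, hvs⟩
    obtain ⟨a, rfl⟩ := Submodule.mem_span_singleton.mp hvs
    exact ⟨⟨a, show a • u ∈ U from hvU⟩, rfl⟩

/-- `stabSub` of a subspace of `E` itself at a nonzero point has the same dimension. -/
lemma stabSub_finrank_self (B : Submodule F E) {c : E} (hc : c ≠ 0) :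
    Module.finrank F (stabSub F E B c) = Module.finrank F B := by
  set f0 : ↥(stabSub F E B c) →ₗ[F] E :=
    ((LinearMap.toSpanSingleton E E c).restrictScalars F).comp (Submodule.subtype _) with hf0
  have hf0app : ∀ l : ↥(stabSub F E B c), f0 l = (l : E) * c := fun l => rfl
  have hmem : ∀ l : ↥(stabSub F E B c), f0 l ∈ B := fun l => l.2
  refine LinearEquiv.finrank_eq (LinearEquiv.ofBijective (f0.codRestrict _ hmem) ⟨?_, ?_⟩)
  · intro a b hab
    have h1 : (a : E) * c = (b : E) * c := congrArg Subtype.val hab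
    exact Subtype.ext (mul_right_cancel₀ hc h1)
  · rintro ⟨v, hv⟩
    refine ⟨⟨v / c, show (v / c) • c ∈ B from ?_⟩, ?_⟩
    · rw [smul_eq_mul, div_mul_cancel₀ v hc]; exact hv
    · exact Subtype.ext (by simpa [hf0app] using div_mul_cancel₀ v hc)

end aux2

theorem stmt_17 (F E : Type*) [Field F] [Fintype F] [Field E] [Algebra F E]
    [FiniteDimensional F E] (q h k : ℕ) (hq : Fintype.card F = q)
    (hh : Module.finrank F E = h) (hk5 : 5 ≤ k) (hkh : k ≤ h)
    (U : Submodule F (E × E)) (hU : Module.finrank F U = k)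
    (v₀ : E × E) (hv₀U : v₀ ∈ U) (hv₀ : v₀ ≠ 0)
    (hv₀wt : Module.finrank F ↥(U ⊓ (Submodule.span E {v₀}).restrictScalars F) = k - 2)
    (hwt : ∀ u ∈ U, u ≠ 0 → u ∉ Submodule.span E {v₀} →
      Module.finrank F ↥(U ⊓ (Submodule.span E {u}).restrictScalars F) = 2) :
    ∃ K : IntermediateField F E, ∃ W : Submodule F (E × E),
      (∀ x ∈ K, ∀ w ∈ W, x • w ∈ W) ∧ LSet F W = LSet F U ∧
      1 < Module.finrank F K ∧ Module.finrank F K ∣ k - 2 := by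
  classical
  set T : Submodule F E := stabSub F E U v₀ with hT
  have hmemT : ∀ l : E, l ∈ T ↔ l • v₀ ∈ U := fun l => Iff.rfl
  have hTrank : Module.finrank F T = k - 2 := by
    rw [hT, stabSub_finrank F E U hv₀, hv₀wt]
  -- the image subspace B
  set g : ↥U →ₗ[F] E := ((yfun v₀).restrictScalars F).comp U.subtype with hg
  have hgapp : ∀ u : ↥U, g u = yfun v₀ u.1 := fun _ => rfl
  set B : Submodule F E := LinearMap.range g with hB
  have hmemB : ∀ u ∈ U, yfun v₀ u ∈ B := fun u hu => ⟨⟨u, hu⟩, rfl⟩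
  have hexB : ∀ c ∈ B, ∃ u ∈ U, yfun v₀ u = c := by
    rintro c ⟨u', rfl⟩; exact ⟨u'.1, u'.2, rfl⟩
  have hkerrank : Module.finrank F (LinearMap.ker g) = k - 2 := by
    have hker : LinearMap.ker g =
        Submodule.comap U.subtype (U ⊓ (Submodule.span E {v₀}).restrictScalars F) := by
      ext u
      simp only [LinearMap.mem_ker, Submodule.mem_comap, Submodule.mem_inf,
        Submodule.coe_subtype, Submodule.restrictScalars_mem, hgapp]
      constructor
      · intro h0; exact ⟨u.2, (yfun_eq_zero_iff hv₀).mp h0⟩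
      · intro h0; exact (yfun_eq_zero_iff hv₀).mpr h0.2
    rw [hker, LinearEquiv.finrank_eq (Submodule.comapSubtypeEquivOfLe inf_le_left)]
    exact hv₀wt
  have hBrank : Module.finrank F B = 2 := by
    have h1 := LinearMap.finrank_range_add_finrank_ker g
    rw [hkerrank, hU] at h1
    have h2 : Module.finrank F B = Module.finrank F (LinearMap.range g) := rfl
    omega
  -- the key consequence of the weight hypothesis
  have fact2 : ∀ u ∈ U, yfun v₀ u ≠ 0 → ∀ c ∈ B, (c / yfun v₀ u) • u ∈ U := by
    intro u huU hyu c hc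
    have hu0 : u ≠ 0 := by rintro rfl; simp at hyu
    have hunotspan : u ∉ Submodule.span E {v₀} := fun hsp =>
      hyu ((yfun_eq_zero_iff hv₀).mpr hsp)
    have h1 : Module.finrank F (stabSub F E U u) = 2 := by
      rw [stabSub_finrank F E U hu0]; exact hwt u huU hu0 hunotspan
    have h2 : stabSub F E U u ≤ stabSub F E B (yfun v₀ u) := by
      intro l hl
      rw [mem_stabSub] at hl ⊢
      rw [← map_smul (yfun v₀) l u]
      exact hmemB _ hl
    have h3 : Module.finrank F (stabSub F E B (yfun v₀ u)) = 2 := by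
      rw [stabSub_finrank_self F E B hyu, hBrank]
    have heq : stabSub F E U u = stabSub F E B (yfun v₀ u) :=
      Submodule.eq_of_le_of_finrank_le h2 (le_of_eq (h3.trans h1.symm))
    have hcmem : c / yfun v₀ u ∈ stabSub F E B (yfun v₀ u) := by
      rw [mem_stabSub, smul_eq_mul, div_mul_cancel₀ c hyu]
      exact hc
    rw [← heq] at hcmem
    exact hcmem
  have hyv₀ : yfun v₀ v₀ = 0 :=
    (yfun_eq_zero_iff hv₀).mpr (Submodule.mem_span_singleton_self v₀)
  -- multiplicative stability of T
  have factT : ∀ b ∈ B, b ≠ 0 → ∀ c ∈ B, ∀ t ∈ T, c / b * t ∈ T := by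
    intro b hb hb0 c hc t ht
    obtain ⟨ub, hubU, hyub⟩ := hexB b hb
    have htv : t • v₀ ∈ U := (hmemT t).mp ht
    have hu : t • v₀ + ub ∈ U := U.add_mem htv hubU
    have hyu : yfun v₀ (t • v₀ + ub) = b := by
      rw [map_add, map_smul, hyv₀, smul_zero, zero_add, hyub]
    have h1 : (c / b) • (t • v₀ + ub) ∈ U := by
      have := fact2 _ hu (by rw [hyu]; exact hb0) c hc
      rwa [hyu] at this
    have h2 : (c / b) • ub ∈ U := by
      have := fact2 ub hubU (by rw [hyub]; exact hb0) c hc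
      rwa [hyub] at this
    have h3 : (c / b) • (t • v₀) ∈ U := by
      have := U.sub_mem h1 h2
      rwa [smul_add, add_sub_cancel_right] at this
    rw [hmemT, ← smul_smul]
    exact h3
  -- the stabilizer field K
  set Ssub : Submodule F E :=
    { carrier := {e : E | ∀ t ∈ T, e * t ∈ T}
      zero_mem' := fun t ht => by rw [zero_mul]; exact T.zero_mem
      add_mem' := fun {a b} ha hb t ht => by
        rw [add_mul]; exact T.add_mem (ha t ht) (hb t ht)
      smul_mem' := fun r e he t ht => by
        rw [smul_mul_assoc]; exact T.smul_mem r (he t ht) } with hSsub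
  have hmemSsub : ∀ e : E, e ∈ Ssub ↔ ∀ t ∈ T, e * t ∈ T := fun e => Iff.rfl
  set Salg : Subalgebra F E := Ssub.toSubalgebra
    (fun t ht => by rw [one_mul]; exact ht)
    (fun a b ha hb t ht => by rw [mul_assoc]; exact ha _ (hb t ht)) with hSalg
  have hmemSalg : ∀ e : E, e ∈ Salg ↔ ∀ t ∈ T, e * t ∈ T := fun e => Iff.rfl
  have hinv : ∀ e ∈ Salg, e⁻¹ ∈ Salg := by
    intro e he
    by_cases he0 : e = 0
    · rw [he0, inv_zero]; exact Salg.zero_mem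
    · rw [hmemSalg] at he ⊢
      set φ0 : ↥T →ₗ[F] E := (LinearMap.mulLeft F e).comp T.subtype with hφ0
      have hφ0app : ∀ t : ↥T, φ0 t = e * t.1 := fun t => rfl
      set φ : ↥T →ₗ[F] ↥T := φ0.codRestrict T (fun t => he t.1 t.2) with hφ
      have hinj : Function.Injective φ := by
        intro a b hab
        have h1 : e * a.1 = e * b.1 := congrArg Subtype.val hab
        exact Subtype.ext (mul_left_cancel₀ he0 h1)
      have hsurj := LinearMap.injective_iff_surjective.mp hinj
      intro t ht
      obtain ⟨⟨t', ht'⟩, hts⟩ := hsurj ⟨t, ht⟩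
      have h2 : e * t' = t := congrArg Subtype.val hts
      have h3 : e⁻¹ * t = t' := by rw [← h2, ← mul_assoc, inv_mul_cancel₀ he0, one_mul]
      rw [h3]
      exact ht'
  set K : IntermediateField F E := Salg.toIntermediateField hinv with hK
  have hmemK : ∀ e : E, e ∈ K ↔ ∀ t ∈ T, e * t ∈ T := fun e => Iff.rfl
  -- the element μ
  have hBne : ∃ b₀ ∈ B, b₀ ≠ 0 := by
    by_contra hcon
    push_neg at hcon
    have hbot : B = ⊥ := by
      ext x
      simp only [Submodule.mem_bot]
      exact ⟨fun hx => hcon x hx, fun hx => by rw [hx]; exact B.zero_mem⟩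
    rw [hbot, finrank_bot] at hBrank
    omega
  obtain ⟨b₀, hb₀B, hb₀⟩ := hBne
  have hμex : ∃ c ∈ B, c / b₀ ∉ (⊥ : IntermediateField F E) := by
    by_contra hcon
    push_neg at hcon
    have hle : B ≤ Submodule.span F {b₀} := by
      intro c hc
      have h1 := hcon c hc
      rw [IntermediateField.mem_bot] at h1
      obtain ⟨r, hr⟩ := h1
      have h2 : c = r • b₀ := by
        rw [Algebra.smul_def, hr, div_mul_cancel₀ c hb₀]
      rw [h2]
      exact Submodule.smul_mem _ r (Submodule.mem_span_singleton_self b₀)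
    have h2 : Module.finrank F B ≤ Module.finrank F (Submodule.span F {b₀}) :=
      Submodule.finrank_mono hle
    rw [hBrank, finrank_span_singleton hb₀] at h2
    omega
  obtain ⟨b₁, hb₁B, hμbot⟩ := hμex
  have hμK : b₁ / b₀ ∈ K := by
    rw [hmemK]
    exact factT b₀ hb₀B hb₀ b₁ hb₁B
  have hK1 : 1 < Module.finrank F K := by
    rcases Nat.lt_or_ge 1 (Module.finrank F K) with hlt | hge
    · exact hlt
    · exfalso
      have hpos : 0 < Module.finrank F K := Module.finrank_pos
      have hone : Module.finrank F K = 1 := by omega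
      rw [IntermediateField.finrank_eq_one_iff] at hone
      rw [hone] at hμK
      exact hμbot hμK
  -- divisibility
  set TK : Submodule K E :=
    { carrier := (T : Set E)
      zero_mem' := T.zero_mem
      add_mem' := fun {a b} ha hb => T.add_mem ha hb
      smul_mem' := fun κ t ht => by
        have h1 : κ • t = (κ : E) * t := Algebra.smul_def κ t
        rw [SetLike.mem_coe] at ht ⊢
        rw [h1]
        exact ((hmemK (κ : E)).mp κ.2) t ht } with hTK
  have hdvd : Module.finrank F K ∣ k - 2 := by
    have htow := Module.finrank_mul_finrank F ↥K ↥(TK.restrictScalars F)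
    have hTeq : TK.restrictScalars F = T := by
      ext x; rfl
    have h2 : Module.finrank F ↥(TK.restrictScalars F) = k - 2 := by
      rw [hTeq]; exact hTrank
    exact ⟨_, (htow.trans h2).symm⟩
  -- the subspace W
  obtain ⟨u₀, hu₀U, hyu₀⟩ := hexB b₀ hb₀B
  set W : Submodule F (E × E) :=
    { carrier := {v | ∃ κ ∈ K, ∃ t ∈ T, v = κ • u₀ + t • v₀}
      zero_mem' := ⟨0, K.zero_mem, 0, T.zero_mem, by rw [zero_smul, zero_smul, add_zero]⟩
      add_mem' := by
        rintro v v' ⟨κ, hκ, t, ht, rfl⟩ ⟨κ', hκ', t', ht', rfl⟩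
        exact ⟨κ + κ', K.add_mem hκ hκ', t + t', T.add_mem ht ht', by module⟩
      smul_mem' := by
        rintro r v ⟨κ, hκ, t, ht, rfl⟩
        refine ⟨r • κ, ?_, r • t, T.smul_mem r ht,
          by rw [smul_add, smul_assoc, smul_assoc]⟩
        rw [Algebra.smul_def]
        exact K.mul_mem (IntermediateField.algebraMap_mem K r) hκ } with hW
  have hmemW : ∀ v : E × E, v ∈ W ↔ ∃ κ ∈ K, ∃ t ∈ T, v = κ • u₀ + t • v₀ := fun v => Iff.rfl
  refine ⟨K, W, ?_, ?_, hK1, hdvd⟩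
  · -- K-stability
    intro x hx w hw
    rw [hmemW] at hw ⊢
    obtain ⟨κ, hκ, t, ht, rfl⟩ := hw
    refine ⟨x * κ, K.mul_mem hx hκ, x * t, ((hmemK x).mp hx) t ht, ?_⟩
    rw [smul_add, smul_smul, smul_smul]
  · -- LSet equality
    ext p
    constructor
    · rintro ⟨w, hwW, hw0, rfl⟩
      rw [hmemW] at hwW
      obtain ⟨κ, hκ, t, ht, rfl⟩ := hwW
      by_cases hκ0 : κ = 0
      · subst hκ0
        rw [zero_smul, zero_add] at hw0 ⊢
        exact ⟨t • v₀, (hmemT t).mp ht, hw0, rfl⟩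
      · set u : E × E := u₀ + (κ⁻¹ * t) • v₀ with hu
        have huw : κ • u = κ • u₀ + t • v₀ := by
          rw [hu, smul_add, smul_smul, mul_inv_cancel_left₀ hκ0]
        have huU : u ∈ U := U.add_mem hu₀U ((hmemT _).mp
          (((hmemK κ⁻¹).mp (K.inv_mem hκ)) t ht))
        have hu0 : u ≠ 0 := by
          intro h0
          rw [h0, smul_zero] at huw
          exact hw0 huw.symm
        refine ⟨u, huU, hu0, ?_⟩
        rw [← huw]
        exact Submodule.span_singleton_smul_eq (isUnit_iff_ne_zero.mpr hκ0) u
    · rintro ⟨u, huU, hu0, rfl⟩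
      by_cases hyu : yfun v₀ u = 0
      · obtain ⟨l, hl⟩ := Submodule.mem_span_singleton.mp ((yfun_eq_zero_iff hv₀).mp hyu)
        have hlT : l ∈ T := (hmemT l).mpr (by rw [hl]; exact huU)
        refine ⟨u, ?_, hu0, rfl⟩
        rw [hmemW]
        exact ⟨0, K.zero_mem, l, hlT, by rw [zero_smul, zero_add, hl]⟩
      · set a : E := b₀ / yfun v₀ u with ha
        have ha0 : a ≠ 0 := div_ne_zero hb₀ hyu
        have hu'U : a • u ∈ U := fact2 u huU hyu b₀ hb₀B
        have hyu' : yfun v₀ (a • u) = b₀ := by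
          rw [map_smul, smul_eq_mul, ha, div_mul_cancel₀ b₀ hyu]
        have hzU : a • u - u₀ ∈ U := U.sub_mem hu'U hu₀U
        have hyz : yfun v₀ (a • u - u₀) = 0 := by
          rw [map_sub, hyu', hyu₀, sub_self]
        obtain ⟨l, hl⟩ := Submodule.mem_span_singleton.mp ((yfun_eq_zero_iff hv₀).mp hyz)
        have hlT : l ∈ T := (hmemT l).mpr (by rw [hl]; exact hzU)
        have hu'W : a • u ∈ W := by
          rw [hmemW]
          refine ⟨1, K.one_mem, l, hlT, ?_⟩
          rw [one_smul, hl]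
          abel
        have hu'0 : a • u ≠ 0 := by
          intro h0
          rw [h0, map_zero] at hyu'
          exact hb₀ hyu'.symm
        refine ⟨a • u, hu'W, hu'0, ?_⟩
        exact (Submodule.span_singleton_smul_eq (isUnit_iff_ne_zero.mpr ha0) u).symm
end
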